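/- Value substitution: if 𝒢[x:S] ⊢ M : T | e₁, the variable x does not occur in the domain of the context pattern 𝒢 (i.e., x ∉ dom(𝒢[·])), and C ⊢ V : S | e₂ for a run-time context C and value V, then 𝒢[C] ⊢ M[V/x] : T | e₁ ⊔ e₂. -/

import Mathlib

set_option autoImplicit false
set_option linter.unusedVariables false

namespace LawOrder

/-! ## Graph representations -/

structure Graph (B : Type) where
  n : ℕ
  label : ℕ → B
  edge : ℕ → ℕ → Prop
  edge_lt : ∀ i j, edge i j → i < n ∧ j < n

namespace Graph

variable {B : Type}

/-- The edge relation is acyclic. -/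
def Acyclic (G : Graph B) : Prop := ∀ i, ¬ Relation.TransGen G.edge i i

/-- The empty graph representation. -/
def zero (B : Type) [Inhabited B] : Graph B :=
  ⟨0, fun _ => default, fun _ _ => False, fun _ _ h => h.elim⟩

/-- Union of two graph representations: disjoint union, second part shifted. -/
def union (G₁ G₂ : Graph B) : Graph B where
  n := G₁.n + G₂.n
  label := fun i => if i < G₁.n then G₁.label i else G₂.label (i - G₁.n)
  edge := fun i j =>
    G₁.edge i j ∨ (G₁.n ≤ i ∧ G₁.n ≤ j ∧ G₂.edge (i - G₁.n) (j - G₁.n))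
  edge_lt := by
    intro i j h
    rcases h with h | ⟨hi, hj, h⟩
    · have := G₁.edge_lt i j h; omega
    · have := G₂.edge_lt _ _ h; omega

/-- Join of two graph representations: union plus all edges from the first
    part to the second part. -/
def join (G₁ G₂ : Graph B) : Graph B where
  n := G₁.n + G₂.n
  label := fun i => if i < G₁.n then G₁.label i else G₂.label (i - G₁.n)
  edge := fun i j =>
    G₁.edge i j ∨ (G₁.n ≤ i ∧ G₁.n ≤ j ∧ G₂.edge (i - G₁.n) (j - G₁.n)) ∨
      (i < G₁.n ∧ G₁.n ≤ j ∧ j < G₁.n + G₂.n)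
  edge_lt := by
    intro i j h
    rcases h with h | ⟨hi, hj, h⟩ | ⟨hi, hj₁, hj₂⟩
    · have := G₁.edge_lt i j h; omega
    · have := G₂.edge_lt _ _ h; omega
    · omega

/-- Isomorphism of graph representations. -/
def Iso (G₁ G₂ : Graph B) : Prop :=
  G₁.n = G₂.n ∧ ∃ f : Fin G₁.n → Fin G₁.n, Function.Bijective f ∧
    (∀ i j : Fin G₁.n, G₁.edge (f i).val (f j).val ↔ G₂.edge i.val j.val) ∧
    (∀ i : Fin G₁.n, G₁.label (f i).val = G₂.label i.val)

/-- `G₁` is a spanning graph representation of `G₂`: same vertices and labels,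
    and the edges of `G₁` are contained in those of `G₂`. -/
def Spanning (G₁ G₂ : Graph B) : Prop :=
  G₁.n = G₂.n ∧ (∀ i, i < G₁.n → G₁.label i = G₂.label i) ∧
    ∀ i j, G₁.edge i j → G₂.edge i j

/-- `f` is a topological ordering of `G`: `f` enumerates the vertices so that
    edges always point forward. -/
def IsTopOrder (G : Graph B) (f : Equiv.Perm (Fin G.n)) : Prop :=
  ∀ i j : Fin G.n, G.edge i.val j.val → f.symm i < f.symm j

/-- `G` has exactly one topological ordering. -/
def Traceable (G : Graph B) : Prop :=
  ∃! f : Equiv.Perm (Fin G.n), G.IsTopOrder f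

/-- The identity enumeration is a topological ordering: all edges increase. -/
def TopOrdered (G : Graph B) : Prop := ∀ i j, G.edge i j → i < j

/-- `k` is a union cut of `G`: no edge crosses from below `k` to `k` or above. -/
def UnionCut (G : Graph B) (k : ℕ) : Prop :=
  0 < k ∧ k < G.n ∧ ∀ i j, i < k → k ≤ j → ¬ G.edge i j

/-- `k` is a join cut of `G`: every pair crossing from below `k` to `k` or
    above (within range) is an edge. -/
def JoinCut (G : Graph B) (k : ℕ) : Prop :=
  0 < k ∧ k < G.n ∧ ∀ i j, i < k → k ≤ j → j < G.n → G.edge i j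

/-- Lower part of the index cut at `k`. -/
def cutLo (G : Graph B) (k : ℕ) : Graph B where
  n := k
  label := G.label
  edge := fun i j => G.edge i j ∧ i < k ∧ j < k
  edge_lt := fun i j h => ⟨h.2.1, h.2.2⟩

/-- Upper part of the index cut at `k` (re-indexed from 0). -/
def cutHi (G : Graph B) (k : ℕ) : Graph B where
  n := G.n - k
  label := fun i => G.label (i + k)
  edge := fun i j => G.edge (i + k) (j + k)
  edge_lt := by
    intro i j h
    have := G.edge_lt _ _ h
    omega

/-- Weak connectedness: any two vertices are joined by an undirected path. -/
def WeaklyConnected (G : Graph B) : Prop :=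
  ∀ i j, i < G.n → j < G.n →
    Relation.ReflTransGen (fun a b => G.edge a b ∨ G.edge b a) i j

/-- Union of a nonempty sequence of graph representations. -/
def unionList (G : Graph B) (L : List (Graph B)) : Graph B :=
  L.foldl union G

end Graph

/-! ## Contexts built from bindings with ordered and unordered composition -/

inductive GCtx (B : Type) where
  | empty : GCtx B
  | bind : B → GCtx B
  | comma : GCtx B → GCtx B → GCtx B
  | par : GCtx B → GCtx B → GCtx B

/-- Context patterns: contexts with a single hole. -/
inductive GPat (B : Type) where
  | hole : GPat B
  | commaL : GPat B → GCtx B → GPat B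
  | commaR : GCtx B → GPat B → GPat B
  | parL : GPat B → GCtx B → GPat B
  | parR : GCtx B → GPat B → GPat B

def GPat.fill {B : Type} : GPat B → GCtx B → GCtx B
  | .hole, Γ => Γ
  | .commaL G Δ, Γ => .comma (G.fill Γ) Δ
  | .commaR Δ G, Γ => .comma Δ (G.fill Γ)
  | .parL G Δ, Γ => .par (G.fill Γ) Δ
  | .parR Δ G, Γ => .par Δ (G.fill Γ)

def GCtx.toList {B : Type} : GCtx B → List B
  | .empty => []
  | .bind b => [b]
  | .comma Γ₁ Γ₂ => Γ₁.toList ++ Γ₂.toList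
  | .par Γ₁ Γ₂ => Γ₁.toList ++ Γ₂.toList

/-- Graph part of the interpretation of a context: unrestricted bindings
    contribute no vertex, ordered bindings one vertex; `comma` is join,
    `par` is union. -/
def GCtx.interpG {B : Type} [Inhabited B] (unr : B → Bool) : GCtx B → Graph B
  | .empty => Graph.zero B
  | .bind b =>
      if unr b then Graph.zero B
      else ⟨1, fun _ => b, fun _ _ => False, fun _ _ h => h.elim⟩
  | .comma Γ₁ Γ₂ => (interpG unr Γ₁).join (interpG unr Γ₂)
  | .par Γ₁ Γ₂ => (interpG unr Γ₁).union (interpG unr Γ₂)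

/-- Set part of the interpretation of a context: the set of its
    unrestricted bindings. -/
def GCtx.unrSet {B : Type} (unr : B → Bool) : GCtx B → Set B
  | .empty => ∅
  | .bind b => if unr b then {b} else ∅
  | .comma Γ₁ Γ₂ => unrSet unr Γ₁ ∪ unrSet unr Γ₂
  | .par Γ₁ Γ₂ => unrSet unr Γ₁ ∪ unrSet unr Γ₂

/-! ## Ordered partial monoids -/

structure OPM (α : Type) where
  mul : α → α → Option α
  eps : α
  le : α → α → Prop
  le_refl : ∀ a, le a a
  le_trans : ∀ a b c, le a b → le b c → le a c
  eps_mul : ∀ a, mul eps a = some a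
  mul_eps : ∀ a, mul a eps = some a
  mul_assoc : ∀ a b c,
    (mul a b).bind (fun x => mul x c) = (mul b c).bind (fun x => mul a x)
  mul_mono : ∀ a a' b b' c', le a a' → le b b' → mul a' b' = some c' →
    ∃ c, mul a b = some c ∧ le c c'

/-- `P.mulLe a b c` means `a ⊙ b` is defined and `a ⊙ b ≤ c`. -/
def OPM.mulLe {α : Type} (P : OPM α) (a b c : α) : Prop :=
  ∃ r, P.mul a b = some r ∧ P.le r c

/-! ## Types and effects (effects are booleans: `false` = 0, `true` = 1) -/

inductive Ty (α : Type) where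
  | unit : Ty α
  | res : α → Ty α
  | arrow : Ty α → Bool → Ty α → Ty α
  | uarrow : Ty α → Bool → Ty α → Ty α
  | rarrow : Ty α → Bool → Ty α → Ty α
  | larrow : Ty α → Bool → Ty α → Ty α
  | uprod : Ty α → Ty α → Ty α
  | oprod : Ty α → Ty α → Ty α

def Ty.unrB {α : Type} : Ty α → Bool
  | .unit => true
  | .res _ => false
  | .arrow _ _ _ => true
  | .uarrow _ _ _ => false
  | .rarrow _ _ _ => false
  | .larrow _ _ _ => false
  | .uprod S T => S.unrB && T.unrB
  | .oprod S T => S.unrB && T.unrB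

/-- Unrestricted types. -/
def Ty.Unr {α : Type} (T : Ty α) : Prop := T.unrB = true

/-- Ordered types. -/
def Ty.Ord {α : Type} (T : Ty α) : Prop := T.unrB = false

/-! ## Bindings and typing contexts -/

inductive Binding (α : Type) where
  | var : ℕ → Ty α → Binding α
  | loc : ℕ → α → Binding α

instance {α : Type} : Inhabited (Binding α) := ⟨Binding.var 0 Ty.unit⟩

def Binding.unrB {α : Type} : Binding α → Bool
  | .var _ T => T.unrB
  | .loc _ _ => false

abbrev Ctx (α : Type) := GCtx (Binding α)
abbrev CtxPat (α : Type) := GPat (Binding α)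

/-- Graph part of the interpretation of a typing context. -/
def interpC {α : Type} (Γ : Ctx α) : Graph (Binding α) :=
  GCtx.interpG Binding.unrB Γ

/-- Set part of the interpretation of a typing context. -/
def unrSetC {α : Type} (Γ : Ctx α) : Set (Binding α) :=
  GCtx.unrSet Binding.unrB Γ

/-- Subcontext relation `Γ₁ ≲ Γ₂`: up to isomorphism on both sides, the graph
    of `Γ₁` is a spanning subgraph of the graph of `Γ₂`, and the unrestricted
    set of `Γ₂` is contained in that of `Γ₁`. -/
def SubC {α : Type} (Γ₁ Γ₂ : Ctx α) : Prop :=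
  (∃ G₁ G₂ : Graph (Binding α),
      Graph.Iso (interpC Γ₁) G₁ ∧ Graph.Spanning G₁ G₂ ∧ Graph.Iso G₂ (interpC Γ₂)) ∧
    unrSetC Γ₂ ⊆ unrSetC Γ₁

def vdom {α : Type} (Γ : Ctx α) : Set ℕ :=
  {x | ∃ T, Binding.var x T ∈ GCtx.toList Γ}

def ldom {α : Type} (Γ : Ctx α) : Set ℕ :=
  {l | ∃ m, Binding.loc l m ∈ GCtx.toList Γ}

/-- All bindings of the context are unrestricted. -/
def isUnrCtx {α : Type} (Γ : Ctx α) : Prop :=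
  ∀ b ∈ GCtx.toList Γ, Binding.unrB b = true

/-- Run-time contexts contain only location bindings. -/
def isRuntime {α : Type} (Γ : Ctx α) : Prop :=
  ∀ b ∈ GCtx.toList Γ, ∃ l m, b = Binding.loc l m

/-! ## Expressions -/

inductive Const (α : Type) where
  | unit : Const α
  | new : α → Const α
  | op : α → Const α
  | split : α → α → Const α
  | drop : Const α

inductive Expr (α : Type) where
  | const : Const α → Expr α
  | loc : ℕ → Expr α
  | var : ℕ → Expr α
  | abs : ℕ → Expr α → Expr α
  | uabs : ℕ → Expr α → Expr α
  | rabs : ℕ → Expr α → Expr α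
  | labs : ℕ → Expr α → Expr α
  | app : Expr α → Expr α → Expr α
  | uapp : Expr α → Expr α → Expr α
  | rapp : Expr α → Expr α → Expr α
  | lapp : Expr α → Expr α → Expr α
  | upair : Expr α → Expr α → Expr α
  | opair : Expr α → Expr α → Expr α
  | ulet : ℕ → ℕ → Expr α → Expr α → Expr α
  | olet : ℕ → ℕ → Expr α → Expr α → Expr α

inductive IsValue {α : Type} : Expr α → Prop where
  | const : ∀ c : Const α, IsValue (Expr.const c)
  | loc : ∀ l : ℕ, IsValue (Expr.loc l)
  | abs : ∀ (x : ℕ) (M : Expr α), IsValue (Expr.abs x M)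
  | uabs : ∀ (x : ℕ) (M : Expr α), IsValue (Expr.uabs x M)
  | rabs : ∀ (x : ℕ) (M : Expr α), IsValue (Expr.rabs x M)
  | labs : ∀ (x : ℕ) (M : Expr α), IsValue (Expr.labs x M)
  | upair : ∀ V₁ V₂ : Expr α, IsValue V₁ → IsValue V₂ → IsValue (Expr.upair V₁ V₂)
  | opair : ∀ V₁ V₂ : Expr α, IsValue V₁ → IsValue V₂ → IsValue (Expr.opair V₁ V₂)

/-- Substitution `M[V/x]` (values substituted at run time are closed, so
    no capture can occur). -/
def subst {α : Type} : Expr α → Expr α → ℕ → Expr α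
  | Expr.const c, _, _ => Expr.const c
  | Expr.loc l, _, _ => Expr.loc l
  | Expr.var y, V, x => if y = x then V else Expr.var y
  | Expr.abs y N, V, x => Expr.abs y (if y = x then N else subst N V x)
  | Expr.uabs y N, V, x => Expr.uabs y (if y = x then N else subst N V x)
  | Expr.rabs y N, V, x => Expr.rabs y (if y = x then N else subst N V x)
  | Expr.labs y N, V, x => Expr.labs y (if y = x then N else subst N V x)
  | Expr.app M N, V, x => Expr.app (subst M V x) (subst N V x)
  | Expr.uapp M N, V, x => Expr.uapp (subst M V x) (subst N V x)
  | Expr.rapp M N, V, x => Expr.rapp (subst M V x) (subst N V x)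
  | Expr.lapp M N, V, x => Expr.lapp (subst M V x) (subst N V x)
  | Expr.upair M N, V, x => Expr.upair (subst M V x) (subst N V x)
  | Expr.opair M N, V, x => Expr.opair (subst M V x) (subst N V x)
  | Expr.ulet y z M N, V, x =>
      Expr.ulet y z (subst M V x) (if y = x ∨ z = x then N else subst N V x)
  | Expr.olet y z M N, V, x =>
      Expr.olet y z (subst M V x) (if y = x ∨ z = x then N else subst N V x)

/-! ## Typing (Fig. 7) -/

inductive Typing {α : Type} (P : OPM α) : Ctx α → Expr α → Ty α → Bool → Prop where
  | unit : Typing P GCtx.empty (Expr.const Const.unit) Ty.unit false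
  | new : ∀ m : α,
      Typing P GCtx.empty (Expr.const (Const.new m))
        (Ty.arrow Ty.unit false (Ty.res m)) false
  | op : ∀ m₀ m₁ m₂ : α, P.mulLe m₁ m₂ m₀ →
      Typing P GCtx.empty (Expr.const (Const.op m₁))
        (Ty.arrow (Ty.res m₀) true (Ty.res m₂)) false
  | split : ∀ m₀ m₁ m₂ : α, P.mulLe m₁ m₂ m₀ →
      Typing P GCtx.empty (Expr.const (Const.split m₁ m₂))
        (Ty.arrow (Ty.res m₀) false (Ty.oprod (Ty.res m₁) (Ty.res m₂))) false
  | drop : ∀ m : α, P.le P.eps m →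
      Typing P GCtx.empty (Expr.const Const.drop)
        (Ty.arrow (Ty.res m) false Ty.unit) false
  | var : ∀ (x : ℕ) (T : Ty α),
      Typing P (GCtx.bind (Binding.var x T)) (Expr.var x) T false
  | loc : ∀ (l : ℕ) (m : α),
      Typing P (GCtx.bind (Binding.loc l m)) (Expr.loc l) (Ty.res m) false
  | abs : ∀ (Γ : Ctx α) (x : ℕ) (S T : Ty α) (M : Expr α) (e : Bool),
      x ∉ vdom Γ → isUnrCtx Γ →
      Typing P (GCtx.comma Γ (GCtx.bind (Binding.var x S))) M T e →
      Typing P Γ (Expr.abs x M) (Ty.arrow S e T) false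
  | uabs : ∀ (Γ : Ctx α) (x : ℕ) (S T : Ty α) (M : Expr α) (e : Bool),
      x ∉ vdom Γ →
      Typing P (GCtx.par Γ (GCtx.bind (Binding.var x S))) M T e →
      Typing P Γ (Expr.uabs x M) (Ty.uarrow S e T) false
  | rabs : ∀ (Γ : Ctx α) (x : ℕ) (S T : Ty α) (M : Expr α) (e : Bool),
      x ∉ vdom Γ →
      Typing P (GCtx.comma Γ (GCtx.bind (Binding.var x S))) M T e →
      Typing P Γ (Expr.rabs x M) (Ty.rarrow S e T) false
  | labs : ∀ (Γ : Ctx α) (x : ℕ) (S T : Ty α) (M : Expr α) (e : Bool),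
      x ∉ vdom Γ →
      Typing P (GCtx.comma (GCtx.bind (Binding.var x S)) Γ) M T e →
      Typing P Γ (Expr.labs x M) (Ty.larrow S e T) false
  | app : ∀ (Γ₁ Γ₂ : Ctx α) (M N : Expr α) (S T : Ty α) (e e₁ e₂ : Bool),
      Typing P Γ₁ M (Ty.arrow S e T) e₁ → Typing P Γ₂ N S e₂ →
      Typing P (GCtx.comma Γ₁ Γ₂) (Expr.app M N) T (e || e₁ || e₂)
  | uapp : ∀ (Γ₁ Γ₂ : Ctx α) (M N : Expr α) (S T : Ty α) (e e₁ e₂ : Bool),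
      Typing P Γ₁ M (Ty.uarrow S e T) e₁ → Typing P Γ₂ N S e₂ →
      Typing P (GCtx.par Γ₁ Γ₂) (Expr.uapp M N) T (e || e₁ || e₂)
  | rapp : ∀ (Γ₁ Γ₂ : Ctx α) (M N : Expr α) (S T : Ty α) (e e₁ : Bool),
      Typing P Γ₁ M (Ty.rarrow S e T) e₁ → Typing P Γ₂ N S false →
      Typing P (GCtx.comma Γ₁ Γ₂) (Expr.rapp M N) T (e || e₁)
  | lapp : ∀ (Γ₁ Γ₂ : Ctx α) (M N : Expr α) (S T : Ty α) (e e₂ : Bool),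
      Typing P Γ₂ M (Ty.larrow S e T) false → Typing P Γ₁ N S e₂ →
      Typing P (GCtx.comma Γ₁ Γ₂) (Expr.lapp M N) T (e || e₂)
  | upair : ∀ (Γ₁ Γ₂ : Ctx α) (M N : Expr α) (S T : Ty α) (e₁ e₂ : Bool),
      Typing P Γ₁ M S e₁ → Typing P Γ₂ N T e₂ →
      Typing P (GCtx.par Γ₁ Γ₂) (Expr.upair M N) (Ty.uprod S T) (e₁ || e₂)
  | opair : ∀ (Γ₁ Γ₂ : Ctx α) (M N : Expr α) (S T : Ty α) (e₁ e₂ : Bool),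
      (Ty.Ord S → e₂ = false) →
      Typing P Γ₁ M S e₁ → Typing P Γ₂ N T e₂ →
      Typing P (GCtx.comma Γ₁ Γ₂) (Expr.opair M N) (Ty.oprod S T) (e₁ || e₂)
  | ulet : ∀ (G : CtxPat α) (Γ : Ctx α) (x y : ℕ) (M N : Expr α)
        (S₁ S₂ T : Ty α) (e : Bool),
      x ≠ y → x ∉ vdom (GPat.fill G Γ) → y ∉ vdom (GPat.fill G Γ) →
      Typing P Γ M (Ty.uprod S₁ S₂) false →
      Typing P (GPat.fill G (GCtx.par (GCtx.bind (Binding.var x S₁))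
        (GCtx.bind (Binding.var y S₂)))) N T e →
      Typing P (GPat.fill G Γ) (Expr.ulet x y M N) T e
  | olet : ∀ (G : CtxPat α) (Γ : Ctx α) (x y : ℕ) (M N : Expr α)
        (S₁ S₂ T : Ty α) (e : Bool),
      x ≠ y → x ∉ vdom (GPat.fill G Γ) → y ∉ vdom (GPat.fill G Γ) →
      Typing P Γ M (Ty.oprod S₁ S₂) false →
      Typing P (GPat.fill G (GCtx.comma (GCtx.bind (Binding.var x S₁))
        (GCtx.bind (Binding.var y S₂)))) N T e →
      Typing P (GPat.fill G Γ) (Expr.olet x y M N) T e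
  | weaken : ∀ (Γ₁ Γ₂ : Ctx α) (M : Expr α) (T : Ty α) (e₁ e₂ : Bool),
      Typing P Γ₁ M T e₁ → SubC Γ₂ Γ₁ → e₁ ≤ e₂ →
      Typing P Γ₂ M T e₂

/-! ## Heaps -/

structure Heap (α : Type) where
  find : ℕ → Option (ℕ × α × α)
  fin : Set.Finite {l | find l ≠ none}

def Heap.dom {α : Type} (H : Heap α) : Set ℕ := {l | H.find l ≠ none}

def Heap.update {α : Type} (H : Heap α) (l : ℕ) (t : ℕ × α × α) : Heap α where
  find := fun l' => if l' = l then some t else H.find l'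
  fin := by
    have hsub : {l' | (if l' = l then some t else H.find l') ≠ none} ⊆
        insert l {l' | H.find l' ≠ none} := by
      intro x hx
      by_cases h : x = l
      · exact Set.mem_insert_iff.mpr (Or.inl h)
      · refine Set.mem_insert_iff.mpr (Or.inr ?_)
        simp only [Set.mem_setOf_eq, if_neg h] at hx
        exact hx
    exact Set.Finite.subset (Set.Finite.insert l H.fin) hsub

def Heap.erase {α : Type} (H : Heap α) (l : ℕ) : Heap α where
  find := fun l' => if l' = l then none else H.find l'
  fin := by
    apply Set.Finite.subset H.fin
    intro x hx
    simp only [Set.mem_setOf_eq] at hx ⊢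
    by_cases h : x = l
    · rw [if_pos h] at hx; exact absurd rfl hx
    · rw [if_neg h] at hx; exact hx

def Heap.empty (α : Type) : Heap α :=
  ⟨fun _ => none, Set.Finite.subset Set.finite_empty (fun _ hx => (hx rfl).elim)⟩

/-! ## Reduction -/

/-- Expression reduction `M →β M'`. -/
inductive BetaStep {α : Type} : Expr α → Expr α → Prop where
  | beta : ∀ (x : ℕ) (M V : Expr α), IsValue V →
      BetaStep (Expr.app (Expr.abs x M) V) (subst M V x)
  | ubeta : ∀ (x : ℕ) (M V : Expr α), IsValue V →
      BetaStep (Expr.uapp (Expr.uabs x M) V) (subst M V x)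
  | rbeta : ∀ (x : ℕ) (M V : Expr α), IsValue V →
      BetaStep (Expr.rapp (Expr.rabs x M) V) (subst M V x)
  | lbeta : ∀ (x : ℕ) (M V : Expr α), IsValue V →
      BetaStep (Expr.lapp (Expr.labs x M) V) (subst M V x)
  | uletv : ∀ (x y : ℕ) (M V₁ V₂ : Expr α), x ≠ y → IsValue V₁ → IsValue V₂ →
      BetaStep (Expr.ulet x y (Expr.upair V₁ V₂) M) (subst (subst M V₁ x) V₂ y)
  | oletv : ∀ (x y : ℕ) (M V₁ V₂ : Expr α), x ≠ y → IsValue V₁ → IsValue V₂ →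
      BetaStep (Expr.olet x y (Expr.opair V₁ V₂) M) (subst (subst M V₁ x) V₂ y)

/-- Configuration reduction `M | ℋ →γ M' | ℋ'`. -/
inductive CfgStep {α : Type} (P : OPM α) : Expr α → Heap α → Expr α → Heap α → Prop where
  | new : ∀ (H : Heap α) (l : ℕ) (m : α), l ∉ Heap.dom H →
      CfgStep P (Expr.app (Expr.const (Const.new m)) (Expr.const Const.unit)) H
        (Expr.loc l) (H.update l (0, m, P.eps))
  | op : ∀ (H : Heap α) (l n : ℕ) (m₀ m m' m'' : α),
      H.find l = some (n, m₀, m') → P.mul m' m = some m'' →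
      (∃ m₃ : α, P.mulLe m'' m₃ m₀) →
      CfgStep P (Expr.app (Expr.const (Const.op m)) (Expr.loc l)) H
        (Expr.loc l) (H.update l (n, m₀, m''))
  | cl1 : ∀ (H : Heap α) (l n : ℕ) (m₀ m : α),
      H.find l = some (n + 1, m₀, m) →
      CfgStep P (Expr.app (Expr.const Const.drop) (Expr.loc l)) H
        (Expr.const Const.unit) (H.update l (n, m₀, m))
  | cl2 : ∀ (H : Heap α) (l : ℕ) (m₀ m : α),
      H.find l = some (0, m₀, m) → P.le m m₀ →
      CfgStep P (Expr.app (Expr.const Const.drop) (Expr.loc l)) H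
        (Expr.const Const.unit) (H.erase l)
  | sp : ∀ (H : Heap α) (l n : ℕ) (m₀ m m₁ m₂ : α),
      H.find l = some (n, m₀, m) →
      CfgStep P (Expr.app (Expr.const (Const.split m₁ m₂)) (Expr.loc l)) H
        (Expr.opair (Expr.loc l) (Expr.loc l)) (H.update l (n + 1, m₀, m))

/-- Call-by-value evaluation contexts (left-to-right, except that
    `<`-applications evaluate right-to-left). -/
inductive ECtx (α : Type) : Type where
  | hole : ECtx α
  | appL : ECtx α → Expr α → ECtx α
  | appR : (V : Expr α) → IsValue V → ECtx α → ECtx α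
  | uappL : ECtx α → Expr α → ECtx α
  | uappR : (V : Expr α) → IsValue V → ECtx α → ECtx α
  | rappL : ECtx α → Expr α → ECtx α
  | rappR : (V : Expr α) → IsValue V → ECtx α → ECtx α
  | lappL : ECtx α → (V : Expr α) → IsValue V → ECtx α
  | lappR : Expr α → ECtx α → ECtx α
  | upairL : ECtx α → Expr α → ECtx α
  | upairR : (V : Expr α) → IsValue V → ECtx α → ECtx α
  | opairL : ECtx α → Expr α → ECtx α
  | opairR : (V : Expr α) → IsValue V → ECtx α → ECtx α
  | uletE : ℕ → ℕ → ECtx α → Expr α → ECtx α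
  | oletE : ℕ → ℕ → ECtx α → Expr α → ECtx α

def ECtx.plug {α : Type} : ECtx α → Expr α → Expr α
  | .hole, M => M
  | .appL E N, M => Expr.app (E.plug M) N
  | .appR V _ E, M => Expr.app V (E.plug M)
  | .uappL E N, M => Expr.uapp (E.plug M) N
  | .uappR V _ E, M => Expr.uapp V (E.plug M)
  | .rappL E N, M => Expr.rapp (E.plug M) N
  | .rappR V _ E, M => Expr.rapp V (E.plug M)
  | .lappL E V _, M => Expr.lapp (E.plug M) V
  | .lappR N E, M => Expr.lapp N (E.plug M)
  | .upairL E N, M => Expr.upair (E.plug M) N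
  | .upairR V _ E, M => Expr.upair V (E.plug M)
  | .opairL E N, M => Expr.opair (E.plug M) N
  | .opairR V _ E, M => Expr.opair V (E.plug M)
  | .uletE x y E N, M => Expr.ulet x y (E.plug M) N
  | .oletE x y E N, M => Expr.olet x y (E.plug M) N

/-- Contextual reduction `M | ℋ → M' | ℋ'`. -/
inductive Step {α : Type} (P : OPM α) : Expr α → Heap α → Expr α → Heap α → Prop where
  | exp : ∀ (E : ECtx α) (M M' : Expr α) (H : Heap α),
      BetaStep M M' → Step P (E.plug M) H (E.plug M') H
  | cfg : ∀ (E : ECtx α) (M M' : Expr α) (H H' : Heap α),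
      CfgStep P M H M' H' → Step P (E.plug M) H (E.plug M') H'

/-! ## Run-time contexts, focus, heap typing -/

/-- Focus on location `l`: replace every binding of a location other than `l`
    by the empty context. -/
def focus {α : Type} : Ctx α → ℕ → Ctx α
  | GCtx.empty, _ => GCtx.empty
  | GCtx.bind (Binding.loc l' m), l =>
      if l' = l then GCtx.bind (Binding.loc l' m) else GCtx.empty
  | GCtx.bind (Binding.var x T), _ => GCtx.bind (Binding.var x T)
  | GCtx.comma Γ₁ Γ₂, l => GCtx.comma (focus Γ₁ l) (focus Γ₂ l)
  | GCtx.par Γ₁ Γ₂, l => GCtx.par (focus Γ₁ l) (focus Γ₂ l)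

/-- A run-time context is order-defined if every focus graph has a unique
    topological ordering. -/
def orderDefined {α : Type} (Γ : Ctx α) : Prop :=
  ∀ l : ℕ, Graph.Traceable (interpC (focus Γ l))

def bUsage {α : Type} (P : OPM α) : Binding α → α
  | Binding.loc _ m => m
  | Binding.var _ _ => P.eps

def listProd {α : Type} (P : OPM α) : List α → Option α
  | [] => some P.eps
  | m :: ms => (listProd P ms).bind fun r => P.mul m r

/-- `focusUsage P Γ l u` : the usage projection of `⟨Γ⟩_l` is defined and
    equal to `u` (the ⊙-product of the usages along a topological ordering of
    the focus graph). -/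
def focusUsage {α : Type} (P : OPM α) (Γ : Ctx α) (l : ℕ) (u : α) : Prop :=
  ∃ f : Equiv.Perm (Fin (interpC (focus Γ l)).n),
    Graph.IsTopOrder (interpC (focus Γ l)) f ∧
      listProd P (List.ofFn fun k =>
        bUsage P ((interpC (focus Γ l)).label (f k).val)) = some u

/-- Heap typing `C ⊢ ℋ`. -/
def HeapTy {α : Type} (P : OPM α) (C : Ctx α) (H : Heap α) : Prop :=
  orderDefined C ∧
  ldom C = Heap.dom H ∧
  ∀ (l n : ℕ) (m₀ m : α), H.find l = some (n, m₀, m) →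
    (interpC (focus C l)).n = n + 1 ∧
    ∃ u r : α, focusUsage P C l u ∧ P.mul m u = some r ∧ P.le r m₀

/-! ## Auxiliary development -/

section Aux

variable {α : Type} {B : Type}

/-- Prefix and suffix of a context pattern. -/
def GPat.pre {B : Type} : GPat B → List B
  | .hole => []
  | .commaL G _ => G.pre
  | .commaR Δ G => Δ.toList ++ G.pre
  | .parL G _ => G.pre
  | .parR Δ G => Δ.toList ++ G.pre

def GPat.suf {B : Type} : GPat B → List B
  | .hole => []
  | .commaL G Δ => G.suf ++ Δ.toList
  | .commaR _ G => G.suf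
  | .parL G Δ => G.suf ++ Δ.toList
  | .parR _ G => G.suf

lemma toList_fill (G : GPat B) (Δ : GCtx B) :
    (G.fill Δ).toList = G.pre ++ Δ.toList ++ G.suf := by
  induction G generalizing Δ with
  | hole => simp [GPat.fill, GPat.pre, GPat.suf]
  | commaL G Δ₂ ih => simp [GPat.fill, GPat.pre, GPat.suf, GCtx.toList, ih]
  | commaR Δ₂ G ih => simp [GPat.fill, GPat.pre, GPat.suf, GCtx.toList, ih]
  | parL G Δ₂ ih => simp [GPat.fill, GPat.pre, GPat.suf, GCtx.toList, ih]
  | parR Δ₂ G ih => simp [GPat.fill, GPat.pre, GPat.suf, GCtx.toList, ih]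

lemma mem_vdom {Γ : Ctx α} {x : ℕ} : x ∈ vdom Γ ↔ ∃ T, Binding.var x T ∈ Γ.toList :=
  Iff.rfl

/-- Graph extensional equality. -/
def Graph.ExtEq (A A' : Graph B) : Prop :=
  A.n = A'.n ∧ (∀ i, i < A.n → A.label i = A'.label i) ∧ (∀ i j, A.edge i j ↔ A'.edge i j)

lemma Graph.ExtEq.refl (A : Graph B) : A.ExtEq A := ⟨rfl, fun _ _ => rfl, fun _ _ => Iff.rfl⟩

lemma Graph.ExtEq.symm {A A' : Graph B} (h : A.ExtEq A') : A'.ExtEq A :=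
  ⟨h.1.symm, fun i hi => (h.2.1 i (h.1 ▸ hi)).symm, fun i j => (h.2.2 i j).symm⟩

lemma Graph.ExtEq.trans {A A' A'' : Graph B} (h : A.ExtEq A') (h' : A'.ExtEq A'') :
    A.ExtEq A'' :=
  ⟨h.1.trans h'.1, fun i hi => (h.2.1 i hi).trans (h'.2.1 i (h.1 ▸ hi)),
    fun i j => (h.2.2 i j).trans (h'.2.2 i j)⟩

lemma Graph.ExtEq.join {A A' C C' : Graph B} (h : A.ExtEq A') (h' : C.ExtEq C') :
    (A.join C).ExtEq (A'.join C') := by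
  obtain ⟨hn, hl, he⟩ := h
  obtain ⟨hn', hl', he'⟩ := h'
  refine ⟨by simp [Graph.join, hn, hn'], ?_, ?_⟩
  · intro i hi
    simp only [Graph.join] at hi ⊢
    rw [← hn]
    by_cases hc : i < A.n
    · simp [hc, hl i hc]
    · simp only [hc, if_false]
      exact hl' _ (by omega)
  · intro i j
    simp only [Graph.join, ← hn, ← hn', he i j, he' (i - A.n) (j - A.n)]

lemma Graph.ExtEq.union {A A' C C' : Graph B} (h : A.ExtEq A') (h' : C.ExtEq C') :
    (A.union C).ExtEq (A'.union C') := by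
  obtain ⟨hn, hl, he⟩ := h
  obtain ⟨hn', hl', he'⟩ := h'
  refine ⟨by simp [Graph.union, hn, hn'], ?_, ?_⟩
  · intro i hi
    simp only [Graph.union] at hi ⊢
    rw [← hn]
    by_cases hc : i < A.n
    · simp [hc, hl i hc]
    · simp only [hc, if_false]
      exact hl' _ (by omega)
  · intro i j
    simp only [Graph.union, ← hn, he i j, he' (i - A.n) (j - A.n)]

@[simp] lemma interpC_empty : interpC (GCtx.empty : Ctx α) = Graph.zero _ := rfl
@[simp] lemma interpC_comma (Γ₁ Γ₂ : Ctx α) :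
    interpC (GCtx.comma Γ₁ Γ₂) = (interpC Γ₁).join (interpC Γ₂) := rfl
@[simp] lemma interpC_par (Γ₁ Γ₂ : Ctx α) :
    interpC (GCtx.par Γ₁ Γ₂) = (interpC Γ₁).union (interpC Γ₂) := rfl

lemma interpC_bind_ord {b : Binding α} (h : b.unrB = false) :
    interpC (GCtx.bind b) = ⟨1, fun _ => b, fun _ _ => False, fun _ _ h => h.elim⟩ := by
  simp [interpC, GCtx.interpG, h]

lemma interpC_bind_unr {b : Binding α} (h : b.unrB = true) :
    interpC (GCtx.bind b) = Graph.zero _ := by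
  simp [interpC, GCtx.interpG, h]

/-- Every graph label is a binding of the context. -/
lemma mem_toList_of_label (Γ : Ctx α) : ∀ i, i < (interpC Γ).n →
    (interpC Γ).label i ∈ Γ.toList := by
  induction Γ with
  | empty => intro i hi; simp [Graph.zero] at hi
  | bind b =>
    intro i hi
    by_cases h : b.unrB
    · rw [interpC_bind_unr h] at hi; simp [Graph.zero] at hi
    · rw [interpC_bind_ord (by simpa using h)] at hi ⊢
      simp [GCtx.toList]
  | comma Γ₁ Γ₂ ih₁ ih₂ =>
    intro i hi
    simp only [interpC_comma, Graph.join] at hi ⊢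
    simp only [GCtx.toList, List.mem_append]
    by_cases hc : i < (interpC Γ₁).n
    · simp only [hc, if_true]; exact Or.inl (ih₁ i hc)
    · simp only [hc, if_false]; exact Or.inr (ih₂ _ (by omega))
  | par Γ₁ Γ₂ ih₁ ih₂ =>
    intro i hi
    simp only [interpC_par, Graph.union] at hi ⊢
    simp only [GCtx.toList, List.mem_append]
    by_cases hc : i < (interpC Γ₁).n
    · simp only [hc, if_true]; exact Or.inl (ih₁ i hc)
    · simp only [hc, if_false]; exact Or.inr (ih₂ _ (by omega))

/-- Every ordered binding of the context is a graph label. -/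
lemma label_of_mem_toList_ord {Γ : Ctx α} {b : Binding α} (hmem : b ∈ Γ.toList)
    (hord : b.unrB = false) : ∃ i, i < (interpC Γ).n ∧ (interpC Γ).label i = b := by
  induction Γ with
  | empty => simp [GCtx.toList] at hmem
  | bind b' =>
    simp only [GCtx.toList, List.mem_singleton] at hmem
    subst hmem
    rw [interpC_bind_ord hord]
    exact ⟨0, Nat.zero_lt_one, rfl⟩
  | comma Γ₁ Γ₂ ih₁ ih₂ =>
    simp only [GCtx.toList, List.mem_append] at hmem
    rcases hmem with h | h
    · obtain ⟨i, hi, hl⟩ := ih₁ h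
      exact ⟨i, by simp [Graph.join]; omega, by simpa [Graph.join, hi] using hl⟩
    · obtain ⟨i, hi, hl⟩ := ih₂ h
      refine ⟨(interpC Γ₁).n + i, by simp [Graph.join]; omega, ?_⟩
      simp only [interpC_comma, Graph.join]
      rw [if_neg (by omega)]
      simpa using hl
  | par Γ₁ Γ₂ ih₁ ih₂ =>
    simp only [GCtx.toList, List.mem_append] at hmem
    rcases hmem with h | h
    · obtain ⟨i, hi, hl⟩ := ih₁ h
      exact ⟨i, by simp [Graph.union]; omega, by simpa [Graph.union, hi] using hl⟩
    · obtain ⟨i, hi, hl⟩ := ih₂ h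
      refine ⟨(interpC Γ₁).n + i, by simp [Graph.union]; omega, ?_⟩
      simp only [interpC_par, Graph.union]
      rw [if_neg (by omega)]
      simpa using hl

lemma mem_unrSet_iff {Γ : Ctx α} {b : Binding α} :
    b ∈ unrSetC Γ ↔ b ∈ Γ.toList ∧ b.unrB = true := by
  induction Γ with
  | empty => simp [unrSetC, GCtx.unrSet, GCtx.toList]
  | bind b' =>
    by_cases h : b'.unrB
    · simp only [unrSetC, GCtx.unrSet, h, if_true, GCtx.toList,
        Set.mem_singleton_iff, List.mem_singleton]
      constructor
      · rintro rfl; exact ⟨rfl, h⟩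
      · rintro ⟨rfl, _⟩; rfl
    · simp only [Bool.not_eq_true] at h
      simp only [unrSetC, GCtx.unrSet, h, Bool.false_eq_true, if_false, GCtx.toList,
        Set.mem_empty_iff_false, List.mem_singleton, false_iff, not_and]
      rintro rfl hu
      simp [hu] at h
  | comma Γ₁ Γ₂ ih₁ ih₂ =>
    simp only [unrSetC, GCtx.unrSet, GCtx.toList, Set.mem_union, List.mem_append] at *
    constructor
    · rintro (h | h)
      · exact ⟨Or.inl (ih₁.1 h).1, (ih₁.1 h).2⟩
      · exact ⟨Or.inr (ih₂.1 h).1, (ih₂.1 h).2⟩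
    · rintro ⟨h | h, hu⟩
      · exact Or.inl (ih₁.2 ⟨h, hu⟩)
      · exact Or.inr (ih₂.2 ⟨h, hu⟩)
  | par Γ₁ Γ₂ ih₁ ih₂ =>
    simp only [unrSetC, GCtx.unrSet, GCtx.toList, Set.mem_union, List.mem_append] at *
    constructor
    · rintro (h | h)
      · exact ⟨Or.inl (ih₁.1 h).1, (ih₁.1 h).2⟩
      · exact ⟨Or.inr (ih₂.1 h).1, (ih₂.1 h).2⟩
    · rintro ⟨h | h, hu⟩
      · exact Or.inl (ih₁.2 ⟨h, hu⟩)
      · exact Or.inr (ih₂.2 ⟨h, hu⟩)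

end Aux
section Aux2

variable {α : Type} {B : Type}

lemma Graph.Iso.refl (A : Graph B) : A.Iso A :=
  ⟨rfl, id, Function.bijective_id, fun _ _ => Iff.rfl, fun _ => rfl⟩

/-- Characterization of the graph part of `SubC`: `GChar A A'` where `A` is the
 graph of the new context and `A'` the graph of the old one. -/
def GChar (A A' : Graph B) : Prop :=
  A.n = A'.n ∧ ∃ g : ℕ → ℕ,
    (∀ i, i < A'.n → g i < A.n) ∧
    (∀ i j, i < A'.n → j < A'.n → g i = g j → i = j) ∧
    (∀ j, j < A.n → ∃ i, i < A'.n ∧ g i = j) ∧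
    (∀ i, i < A'.n → A.label (g i) = A'.label i) ∧
    (∀ i j, i < A'.n → j < A'.n → A.edge (g i) (g j) → A'.edge i j)

lemma gchar_refl (A : Graph B) : GChar A A :=
  ⟨rfl, id, fun _ h => h, fun _ _ _ _ h => h, fun j hj => ⟨j, hj, rfl⟩,
    fun _ _ => rfl, fun _ _ _ _ h => h⟩

lemma gchar_trans {A A' A'' : Graph B} (h : GChar A A') (h' : GChar A' A'') :
    GChar A A'' := by
  obtain ⟨hn, g, hb, hinj, hsurj, hl, he⟩ := h
  obtain ⟨hn', g', hb', hinj', hsurj', hl', he'⟩ := h'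
  refine ⟨hn.trans hn', fun i => g (g' i), ?_, ?_, ?_, ?_, ?_⟩
  · intro i hi; exact hb _ (hn' ▸ hb' _ hi)
  · intro i j hi hj hgg
    exact hinj' _ _ hi hj (hinj _ _ (hn' ▸ hb' _ hi) (hn' ▸ hb' _ hj) hgg)
  · intro j hj
    obtain ⟨i, hi, rfl⟩ := hsurj j hj
    obtain ⟨i', hi', rfl⟩ := hsurj' i (hn' ▸ hi)
    exact ⟨i', hi', rfl⟩
  · intro i hi
    rw [hl _ (hn' ▸ hb' _ hi)]
    exact hl' i hi
  · intro i j hi hj hij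
    exact he' i j hi hj (he _ _ (hn' ▸ hb' _ hi) (hn' ▸ hb' _ hj) hij)

lemma gchar_of_extEq {A A' : Graph B} (h : A.ExtEq A') : GChar A A' := by
  obtain ⟨hn, hl, he⟩ := h
  refine ⟨hn, id, fun i hi => hn ▸ hi, fun _ _ _ _ h => h,
    fun j hj => ⟨j, hn ▸ hj, rfl⟩, fun i hi => hl i (hn ▸ hi),
    fun i j _ _ hij => (he i j).1 hij⟩

lemma char_iff {Γ₂ Γ₁ : Ctx α} :
    SubC Γ₂ Γ₁ ↔ GChar (interpC Γ₂) (interpC Γ₁) ∧ unrSetC Γ₁ ⊆ unrSetC Γ₂ := by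
  constructor
  · rintro ⟨⟨G₁, G₂, ⟨hn₁, f₁, hb₁, he₁, hl₁⟩, ⟨hn₂, hl₂, he₂⟩, ⟨hn₃, f₂, hb₂, he₃, hl₃⟩⟩, hunr⟩
    refine ⟨⟨by omega, ?_⟩, hunr⟩
    have hA' : (interpC Γ₁).n = G₂.n := hn₃.symm
    have hAG : G₁.n = (interpC Γ₂).n := hn₁.symm
    refine ⟨fun i => if h : i < (interpC Γ₁).n then
      (f₁ ⟨(f₂ ⟨i, hA' ▸ h⟩).val, by omega⟩).val else 0, ?_, ?_, ?_, ?_, ?_⟩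
    · intro i hi
      simp only []
      rw [dif_pos hi]
      exact (f₁ _).isLt
    · intro i j hi hj hgg
      simp only [] at hgg
      rw [dif_pos hi, dif_pos hj] at hgg
      have h1 := hb₁.injective (Fin.ext hgg)
      have h1' : (f₂ ⟨i, hA' ▸ hi⟩).val = (f₂ ⟨j, hA' ▸ hj⟩).val := by
        have := congrArg Fin.val h1
        simpa using this
      have := hb₂.injective (Fin.ext h1')
      exact congrArg Fin.val this
    · intro j hj
      obtain ⟨a, ha⟩ := hb₁.surjective ⟨j, hj⟩
      obtain ⟨b, hbeq⟩ := hb₂.surjective ⟨a.val, by omega⟩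
      refine ⟨b.val, by omega, ?_⟩
      simp only []
      rw [dif_pos (show b.val < (interpC Γ₁).n by omega)]
      have h2 : f₂ ⟨b.val, by omega⟩ = ⟨a.val, by omega⟩ := by
        rw [show (⟨b.val, _⟩ : Fin G₂.n) = b from Fin.ext rfl]
        exact hbeq
      have h3 : (⟨(f₂ ⟨b.val, by omega⟩).val, by omega⟩ : Fin (interpC Γ₂).n) = a := by
        apply Fin.ext
        simp [h2]
      rw [h3, ha]
    · intro i hi
      simp only []
      rw [dif_pos hi, hl₁]
      rw [hl₂ _ (by omega)]
      exact hl₃ ⟨i, hA' ▸ hi⟩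
    · intro i j hi hj hij
      simp only [] at hij
      rw [dif_pos hi, dif_pos hj] at hij
      have h1 := (he₁ _ _).1 hij
      have h2 := he₂ _ _ h1
      exact (he₃ ⟨i, hA' ▸ hi⟩ ⟨j, hA' ▸ hj⟩).1 h2
  · rintro ⟨⟨hn, g, hb, hinj, hsurj, hl, he⟩, hunr⟩
    refine ⟨⟨⟨(interpC Γ₁).n,
        fun i => if i < (interpC Γ₁).n then (interpC Γ₂).label (g i) else (interpC Γ₂).label 0,
        fun i j => i < (interpC Γ₁).n ∧ j < (interpC Γ₁).n ∧ (interpC Γ₂).edge (g i) (g j),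
        by rintro i j ⟨hi, hj, _⟩; exact ⟨hi, hj⟩⟩, interpC Γ₁, ?_, ?_, Graph.Iso.refl _⟩, hunr⟩
    · refine ⟨hn, fun i => ⟨g i.val, by have := hb i.val (by omega); omega⟩, ?_, ?_, ?_⟩
      · rw [Finite.injective_iff_bijective.symm]
        intro i j hij
        apply Fin.ext
        exact hinj i.val j.val (by omega) (by omega) (congrArg Fin.val hij)
      · intro i j
        constructor
        · intro hij
          exact ⟨by omega, by omega, hij⟩
        · rintro ⟨_, _, hij⟩
          exact hij
      · intro i
        simp only
        rw [if_pos (show i.val < (interpC Γ₁).n by omega)]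
    · refine ⟨rfl, ?_, ?_⟩
      · intro i hi
        simp only at hi ⊢
        rw [if_pos hi]
        exact hl i hi
      · rintro i j ⟨hi, hj, hij⟩
        exact he i j hi hj hij

lemma subC_refl (Γ : Ctx α) : SubC Γ Γ :=
  char_iff.mpr ⟨gchar_refl _, Set.Subset.refl _⟩

lemma subC_of_extEq {Γ Γ' : Ctx α} (h : (interpC Γ).ExtEq (interpC Γ'))
    (hu : unrSetC Γ' ⊆ unrSetC Γ) : SubC Γ Γ' :=
  char_iff.mpr ⟨gchar_of_extEq h, hu⟩

end Aux2
section Aux3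

variable {α : Type} {B : Type}

/-- Substitute the graph `K` for the vertex `p` of `H` (in place). -/
def Graph.substV (H : Graph B) (p : ℕ) (K : Graph B) : Graph B where
  n := H.n - 1 + K.n
  label := fun i => if i < p then H.label i
    else if i < p + K.n then K.label (i - p) else H.label (i - K.n + 1)
  edge := fun i j => i < H.n - 1 + K.n ∧ j < H.n - 1 + K.n ∧
    (((i < p ∨ p + K.n ≤ i) ∧ (j < p ∨ p + K.n ≤ j) ∧
        H.edge (if i < p then i else i - K.n + 1) (if j < p then j else j - K.n + 1)) ∨
     ((i < p ∨ p + K.n ≤ i) ∧ (p ≤ j ∧ j < p + K.n) ∧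
        H.edge (if i < p then i else i - K.n + 1) p) ∨
     ((p ≤ i ∧ i < p + K.n) ∧ (j < p ∨ p + K.n ≤ j) ∧
        H.edge p (if j < p then j else j - K.n + 1)) ∨
     ((p ≤ i ∧ i < p + K.n) ∧ (p ≤ j ∧ j < p + K.n) ∧ K.edge (i - p) (j - p)))
  edge_lt := fun i j h => ⟨h.1, h.2.1⟩

/-- Common generalization of `join` (`c = True`) and `union` (`c = False`). -/
def Graph.comb (c : Prop) (G₁ G₂ : Graph B) : Graph B where
  n := G₁.n + G₂.n
  label := fun i => if i < G₁.n then G₁.label i else G₂.label (i - G₁.n)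
  edge := fun i j =>
    G₁.edge i j ∨ (G₁.n ≤ i ∧ G₁.n ≤ j ∧ G₂.edge (i - G₁.n) (j - G₁.n)) ∨
      (c ∧ i < G₁.n ∧ G₁.n ≤ j ∧ j < G₁.n + G₂.n)
  edge_lt := by
    intro i j h
    rcases h with h | ⟨hi, hj, h⟩ | ⟨_, hi, hj₁, hj₂⟩
    · have := G₁.edge_lt i j h; omega
    · have := G₂.edge_lt _ _ h; omega
    · omega

lemma extEq_join_comb (G₁ G₂ : Graph B) : (G₁.join G₂).ExtEq (Graph.comb True G₁ G₂) := by
  refine ⟨rfl, fun _ _ => rfl, fun i j => ?_⟩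
  simp only [Graph.join, Graph.comb, true_and]

lemma extEq_union_comb (G₁ G₂ : Graph B) : (G₁.union G₂).ExtEq (Graph.comb False G₁ G₂) := by
  refine ⟨rfl, fun _ _ => rfl, fun i j => ?_⟩
  simp only [Graph.union, Graph.comb, false_and, or_false]

lemma Graph.ExtEq.comb {c : Prop} {A A' C C' : Graph B} (h : A.ExtEq A') (h' : C.ExtEq C') :
    (Graph.comb c A C).ExtEq (Graph.comb c A' C') := by
  obtain ⟨hn, hl, he⟩ := h
  obtain ⟨hn', hl', he'⟩ := h'
  refine ⟨by simp [Graph.comb, hn, hn'], ?_, ?_⟩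
  · intro i hi
    simp only [Graph.comb] at hi ⊢
    rw [← hn]
    by_cases hc : i < A.n
    · simp [hc, hl i hc]
    · simp only [hc, if_false]
      exact hl' _ (by omega)
  · intro i j
    simp only [Graph.comb, ← hn, ← hn', he i j, he' (i - A.n) (j - A.n)]

end Aux3
section Aux4

variable {B : Type}

lemma substV_comb_left (c : Prop) (H I K : Graph B) (p : ℕ) (hp : p < H.n) :
    (Graph.comb c (H.substV p K) I).ExtEq ((Graph.comb c H I).substV p K) := by
  refine ⟨by simp only [Graph.comb, Graph.substV]; omega, ?_, ?_⟩
  · -- labels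
    intro i hi
    dsimp only [Graph.comb, Graph.substV] at hi ⊢
    split_ifs <;> first | rfl | (congr 1 <;> omega) | (exfalso; omega)
  · -- edges
    intro i j
    simp only [Graph.comb, Graph.substV]
    constructor
    · rintro (⟨hi, hj, hD⟩ | ⟨hi, hj, hI⟩ | ⟨hc, hi, hj1, hj2⟩)
      · rcases hD with ⟨ri, rj, hH⟩ | ⟨ri, rj, hH⟩ | ⟨ri, rj, hH⟩ | ⟨ri, rj, hK⟩
        · exact ⟨by omega, by omega, Or.inl ⟨ri, rj, Or.inl hH⟩⟩
        · exact ⟨by omega, by omega, Or.inr (Or.inl ⟨ri, rj, Or.inl hH⟩)⟩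
        · exact ⟨by omega, by omega, Or.inr (Or.inr (Or.inl ⟨ri, rj, Or.inl hH⟩))⟩
        · exact ⟨by omega, by omega, Or.inr (Or.inr (Or.inr ⟨ri, rj, hK⟩))⟩
      · have hb := I.edge_lt _ _ hI
        refine ⟨by omega, by omega, Or.inl ⟨Or.inr (by omega), Or.inr (by omega), ?_⟩⟩
        rw [if_neg (by omega), if_neg (by omega)]
        rw [show i - (H.n - 1 + K.n) = i - K.n + 1 - H.n by omega,
            show j - (H.n - 1 + K.n) = j - K.n + 1 - H.n by omega] at hI
        exact Or.inr (Or.inl ⟨by omega, by omega, hI⟩)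
      · by_cases hbi : p ≤ i ∧ i < p + K.n
        · refine ⟨by omega, by omega,
            Or.inr (Or.inr (Or.inl ⟨hbi, Or.inr (by omega), ?_⟩))⟩
          rw [if_neg (by omega)]
          exact Or.inr (Or.inr ⟨hc, by omega, by omega, by omega⟩)
        · refine ⟨by omega, by omega, Or.inl ⟨by omega, Or.inr (by omega), ?_⟩⟩
          rw [if_neg (show ¬ j < p by omega)]
          by_cases hip : i < p
          · rw [if_pos hip]
            exact Or.inr (Or.inr ⟨hc, by omega, by omega, by omega⟩)
          · rw [if_neg hip]
            exact Or.inr (Or.inr ⟨hc, by omega, by omega, by omega⟩)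
    · rintro ⟨hi, hj, hD⟩
      rcases hD with ⟨ri, rj, hA⟩ | ⟨ri, rj, hA⟩ | ⟨ri, rj, hA⟩ | ⟨ri, rj, hK⟩
      · rcases hA with hH | ⟨ha, hb, hI⟩ | ⟨hc, ha, hb1, hb2⟩
        · have hlt := H.edge_lt _ _ hH
          have hi' : i < H.n - 1 + K.n := by
            rcases ri with h | h
            · omega
            · have h1 := hlt.1
              rw [if_neg (by omega)] at h1
              omega
          have hj' : j < H.n - 1 + K.n := by
            rcases rj with h | h
            · omega
            · have h1 := hlt.2
              rw [if_neg (by omega)] at h1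
              omega
          exact Or.inl ⟨hi', hj', Or.inl ⟨ri, rj, hH⟩⟩
        · have hi1 : p + K.n ≤ i := by
            rcases ri with h | h
            · exfalso; rw [if_pos h] at ha; omega
            · exact h
          have hj1 : p + K.n ≤ j := by
            rcases rj with h | h
            · exfalso; rw [if_pos h] at hb; omega
            · exact h
          rw [if_neg (show ¬ i < p by omega)] at ha hI
          rw [if_neg (show ¬ j < p by omega)] at hb hI
          have hbd := I.edge_lt _ _ hI
          rw [show i - K.n + 1 - H.n = i - (H.n - 1 + K.n) by omega,
            show j - K.n + 1 - H.n = j - (H.n - 1 + K.n) by omega] at hI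
          exact Or.inr (Or.inl ⟨by omega, by omega, hI⟩)
        · have hj1 : p + K.n ≤ j := by
            rcases rj with h | h
            · exfalso; rw [if_pos h] at hb1; omega
            · exact h
          rw [if_neg (show ¬ j < p by omega)] at hb1 hb2
          have hi' : i < H.n - 1 + K.n := by
            rcases ri with h | h
            · omega
            · rw [if_neg (by omega)] at ha; omega
          exact Or.inr (Or.inr ⟨hc, hi', by omega, by omega⟩)
      · rcases hA with hH | ⟨ha, hb, hI⟩ | ⟨hc, ha, hb1, hb2⟩
        · have hlt := H.edge_lt _ _ hH
          have hi' : i < H.n - 1 + K.n := by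
            rcases ri with h | h
            · omega
            · have h1 := hlt.1
              rw [if_neg (by omega)] at h1
              omega
          exact Or.inl ⟨hi', by omega, Or.inr (Or.inl ⟨ri, rj, hH⟩)⟩
        · exfalso; omega
        · exfalso; omega
      · rcases hA with hH | ⟨ha, hb, hI⟩ | ⟨hc, ha, hb1, hb2⟩
        · have hlt := H.edge_lt _ _ hH
          have hj' : j < H.n - 1 + K.n := by
            rcases rj with h | h
            · omega
            · have h1 := hlt.2
              rw [if_neg (by omega)] at h1
              omega
          exact Or.inl ⟨by omega, hj', Or.inr (Or.inr (Or.inl ⟨ri, rj, hH⟩))⟩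
        · exfalso; omega
        · have hj1 : p + K.n ≤ j := by
            rcases rj with h | h
            · exfalso; rw [if_pos h] at hb1; omega
            · exact h
          rw [if_neg (show ¬ j < p by omega)] at hb1 hb2
          exact Or.inr (Or.inr ⟨hc, by omega, by omega, by omega⟩)
      · exact Or.inl ⟨by omega, by omega, Or.inr (Or.inr (Or.inr ⟨ri, rj, hK⟩))⟩

end Aux4
section Aux5

variable {B : Type}

lemma substV_comb_right (c : Prop) (H I K : Graph B) (p : ℕ) (hp : p < H.n) :
    (Graph.comb c I (H.substV p K)).ExtEq ((Graph.comb c I H).substV (I.n + p) K) := by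
  refine ⟨by simp only [Graph.comb, Graph.substV]; omega, ?_, ?_⟩
  · intro i hi
    simp only [Graph.comb, Graph.substV] at hi ⊢
    split_ifs <;> first | rfl | (congr 1 <;> omega) | (exfalso; omega)
  · intro i j
    simp only [Graph.comb, Graph.substV]
    constructor
    · rintro (hI | ⟨hi, hj, hi2, hj2, hD⟩ | ⟨hc, hi, hj1, hj2⟩)
      · have hlt := I.edge_lt _ _ hI
        refine ⟨by omega, by omega, Or.inl ⟨Or.inl (by omega), Or.inl (by omega), ?_⟩⟩
        rw [if_pos (by omega), if_pos (by omega)]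
        exact Or.inl hI
      · rcases hD with ⟨ri, rj, hH⟩ | ⟨ri, rj, hH⟩ | ⟨ri, rj, hH⟩ | ⟨ri, rj, hK⟩
        · have e1 : (if i < I.n + p then i else i - K.n + 1) - I.n
              = (if i - I.n < p then i - I.n else i - I.n - K.n + 1) := by
            rcases ri with h | h
            · rw [if_pos (by omega), if_pos (by omega)]
            · rw [if_neg (by omega), if_neg (by omega)]; omega
          have e2 : (if j < I.n + p then j else j - K.n + 1) - I.n
              = (if j - I.n < p then j - I.n else j - I.n - K.n + 1) := by
            rcases rj with h | h
            · rw [if_pos (by omega), if_pos (by omega)]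
            · rw [if_neg (by omega), if_neg (by omega)]; omega
          have m1 : I.n ≤ (if i < I.n + p then i else i - K.n + 1) := by
            rcases ri with h | h
            · rw [if_pos (by omega)]; omega
            · rw [if_neg (by omega)]; omega
          have m2 : I.n ≤ (if j < I.n + p then j else j - K.n + 1) := by
            rcases rj with h | h
            · rw [if_pos (by omega)]; omega
            · rw [if_neg (by omega)]; omega
          refine ⟨by omega, by omega, Or.inl ⟨by omega, by omega,
            Or.inr (Or.inl ⟨m1, m2, ?_⟩)⟩⟩
          rw [e1, e2]
          exact hH
        · have e1 : (if i < I.n + p then i else i - K.n + 1) - I.n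
              = (if i - I.n < p then i - I.n else i - I.n - K.n + 1) := by
            rcases ri with h | h
            · rw [if_pos (by omega), if_pos (by omega)]
            · rw [if_neg (by omega), if_neg (by omega)]; omega
          have m1 : I.n ≤ (if i < I.n + p then i else i - K.n + 1) := by
            rcases ri with h | h
            · rw [if_pos (by omega)]; omega
            · rw [if_neg (by omega)]; omega
          refine ⟨by omega, by omega, Or.inr (Or.inl ⟨by omega, by omega,
            Or.inr (Or.inl ⟨m1, by omega, ?_⟩)⟩)⟩
          rw [e1, show I.n + p - I.n = p by omega]
          exact hH
        · have e2 : (if j < I.n + p then j else j - K.n + 1) - I.n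
              = (if j - I.n < p then j - I.n else j - I.n - K.n + 1) := by
            rcases rj with h | h
            · rw [if_pos (by omega), if_pos (by omega)]
            · rw [if_neg (by omega), if_neg (by omega)]; omega
          have m2 : I.n ≤ (if j < I.n + p then j else j - K.n + 1) := by
            rcases rj with h | h
            · rw [if_pos (by omega)]; omega
            · rw [if_neg (by omega)]; omega
          refine ⟨by omega, by omega, Or.inr (Or.inr (Or.inl ⟨by omega, by omega,
            Or.inr (Or.inl ⟨by omega, m2, ?_⟩)⟩))⟩
          rw [e2, show I.n + p - I.n = p by omega]
          exact hH
        · refine ⟨by omega, by omega, Or.inr (Or.inr (Or.inr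
            ⟨by omega, by omega, ?_⟩))⟩
          rw [show i - (I.n + p) = i - I.n - p by omega,
            show j - (I.n + p) = j - I.n - p by omega]
          exact hK
      · by_cases hbj : I.n + p ≤ j ∧ j < I.n + p + K.n
        · refine ⟨by omega, by omega, Or.inr (Or.inl ⟨Or.inl (by omega),
            by omega, ?_⟩)⟩
          rw [if_pos (by omega)]
          exact Or.inr (Or.inr ⟨hc, by omega, by omega, by omega⟩)
        · refine ⟨by omega, by omega, Or.inl ⟨Or.inl (by omega), by omega, ?_⟩⟩
          rw [if_pos (by omega)]
          by_cases hjq : j < I.n + p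
          · rw [if_pos hjq]
            exact Or.inr (Or.inr ⟨hc, by omega, by omega, by omega⟩)
          · rw [if_neg hjq]
            exact Or.inr (Or.inr ⟨hc, by omega, by omega, by omega⟩)
    · rintro ⟨hi, hj, hD⟩
      rcases hD with ⟨ri, rj, hA⟩ | ⟨ri, rj, hA⟩ | ⟨ri, rj, hA⟩ | ⟨ri, rj, hK⟩
      · rcases hA with hI | ⟨ha, hb, hH⟩ | ⟨hc, ha, hb1, hb2⟩
        · obtain ⟨hlt1, hlt2⟩ := I.edge_lt _ _ hI
          have hi' : i < I.n + p := by
            rcases ri with h | h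
            · exact h
            · exfalso; rw [if_neg (by omega)] at hlt1; omega
          have hj' : j < I.n + p := by
            rcases rj with h | h
            · exact h
            · exfalso; rw [if_neg (by omega)] at hlt2; omega
          rw [if_pos hi', if_pos hj'] at hI
          exact Or.inl hI
        · have hmi : I.n ≤ i := by
            rcases ri with h | h
            · rw [if_pos h] at ha; exact ha
            · omega
          have hmj : I.n ≤ j := by
            rcases rj with h | h
            · rw [if_pos h] at hb; exact hb
            · omega
          have hlt := H.edge_lt _ _ hH
          have e1 : (if i < I.n + p then i else i - K.n + 1) - I.n
              = (if i - I.n < p then i - I.n else i - I.n - K.n + 1) := by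
            rcases ri with h | h
            · rw [if_pos (by omega), if_pos (by omega)]
            · rw [if_neg (by omega), if_neg (by omega)]; omega
          have e2 : (if j < I.n + p then j else j - K.n + 1) - I.n
              = (if j - I.n < p then j - I.n else j - I.n - K.n + 1) := by
            rcases rj with h | h
            · rw [if_pos (by omega), if_pos (by omega)]
            · rw [if_neg (by omega), if_neg (by omega)]; omega
          rw [e1, e2] at hH
          have hib : i - I.n < H.n - 1 + K.n := by
            rcases ri with h | h
            · omega
            · have := hlt.1
              rw [if_neg (by omega)] at this
              omega
          have hjb : j - I.n < H.n - 1 + K.n := by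
            rcases rj with h | h
            · omega
            · have := hlt.2
              rw [if_neg (by omega)] at this
              omega
          exact Or.inr (Or.inl ⟨hmi, hmj, hib, hjb, Or.inl ⟨by omega, by omega, hH⟩⟩)
        · have hi' : i < I.n := by
            rcases ri with h | h
            · rw [if_pos h] at ha; exact ha
            · exfalso; rw [if_neg (by omega)] at ha; omega
          have hjb : j < I.n + (H.n - 1 + K.n) := by
            rcases rj with h | h
            · omega
            · rw [if_neg (by omega)] at hb2; omega
          have hmj : I.n ≤ j := by
            rcases rj with h | h
            · rw [if_pos h] at hb1; exact hb1
            · omega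
          exact Or.inr (Or.inr ⟨hc, hi', hmj, hjb⟩)
      · rcases hA with hI | ⟨ha, hb, hH⟩ | ⟨hc, ha, hb1, hb2⟩
        · have := (I.edge_lt _ _ hI).2
          exfalso; omega
        · have hmi : I.n ≤ i := by
            rcases ri with h | h
            · rw [if_pos h] at ha; exact ha
            · omega
          have hlt := H.edge_lt _ _ hH
          have e1 : (if i < I.n + p then i else i - K.n + 1) - I.n
              = (if i - I.n < p then i - I.n else i - I.n - K.n + 1) := by
            rcases ri with h | h
            · rw [if_pos (by omega), if_pos (by omega)]
            · rw [if_neg (by omega), if_neg (by omega)]; omega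
          rw [e1, show I.n + p - I.n = p by omega] at hH
          have hib : i - I.n < H.n - 1 + K.n := by
            rcases ri with h | h
            · omega
            · have := hlt.1
              rw [if_neg (by omega)] at this
              omega
          exact Or.inr (Or.inl ⟨hmi, by omega, hib, by omega,
            Or.inr (Or.inl ⟨by omega, by omega, hH⟩)⟩)
        · have hi' : i < I.n := by
            rcases ri with h | h
            · rw [if_pos h] at ha; exact ha
            · exfalso; rw [if_neg (by omega)] at ha; omega
          exact Or.inr (Or.inr ⟨hc, hi', by omega, by omega⟩)
      · rcases hA with hI | ⟨ha, hb, hH⟩ | ⟨hc, ha, hb1, hb2⟩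
        · have := (I.edge_lt _ _ hI).1
          exfalso; omega
        · have hmj : I.n ≤ j := by
            rcases rj with h | h
            · rw [if_pos h] at hb; exact hb
            · omega
          have hlt := H.edge_lt _ _ hH
          have e2 : (if j < I.n + p then j else j - K.n + 1) - I.n
              = (if j - I.n < p then j - I.n else j - I.n - K.n + 1) := by
            rcases rj with h | h
            · rw [if_pos (by omega), if_pos (by omega)]
            · rw [if_neg (by omega), if_neg (by omega)]; omega
          rw [e2, show I.n + p - I.n = p by omega] at hH
          have hjb : j - I.n < H.n - 1 + K.n := by
            rcases rj with h | h
            · omega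
            · have := hlt.2
              rw [if_neg (by omega)] at this
              omega
          exact Or.inr (Or.inl ⟨by omega, hmj, by omega, hjb,
            Or.inr (Or.inr (Or.inl ⟨by omega, by omega, hH⟩))⟩)
        · exfalso; omega
      · rw [show i - (I.n + p) = i - I.n - p by omega,
          show j - (I.n + p) = j - I.n - p by omega] at hK
        exact Or.inr (Or.inl ⟨by omega, by omega, by omega, by omega,
          Or.inr (Or.inr (Or.inr ⟨by omega, by omega, hK⟩))⟩)

end Aux5
section Aux6

variable {α : Type} {B : Type}

/-- Index of the hole of a context pattern in the interpretation graph. -/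
def posG {α : Type} : CtxPat α → ℕ
  | .hole => 0
  | .commaL G _ => posG G
  | .commaR Δ G => (interpC Δ).n + posG G
  | .parL G _ => posG G
  | .parR Δ G => (interpC Δ).n + posG G

lemma posG_lt {v : Binding α} (hv : v.unrB = false) (G : CtxPat α) :
    posG G < (interpC (G.fill (GCtx.bind v))).n := by
  induction G with
  | hole =>
    rw [GPat.fill, interpC_bind_ord hv]
    exact Nat.zero_lt_one
  | commaL G₁ Δ ih => simp only [GPat.fill, interpC_comma, Graph.join, posG]; omega
  | commaR Δ G₁ ih => simp only [GPat.fill, interpC_comma, Graph.join, posG]; omega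
  | parL G₁ Δ ih => simp only [GPat.fill, interpC_par, Graph.union, posG]; omega
  | parR Δ G₁ ih => simp only [GPat.fill, interpC_par, Graph.union, posG]; omega

lemma label_posG {v : Binding α} (hv : v.unrB = false) (G : CtxPat α) :
    (interpC (G.fill (GCtx.bind v))).label (posG G) = v := by
  induction G with
  | hole => rw [GPat.fill, interpC_bind_ord hv]
  | commaL G₁ Δ ih =>
    simp only [GPat.fill, interpC_comma, Graph.join, posG]
    rw [if_pos (posG_lt hv G₁)]
    exact ih
  | commaR Δ G₁ ih =>
    simp only [GPat.fill, interpC_comma, Graph.join, posG]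
    rw [if_neg (by omega), show (interpC Δ).n + posG G₁ - (interpC Δ).n = posG G₁ by omega]
    exact ih
  | parL G₁ Δ ih =>
    simp only [GPat.fill, interpC_par, Graph.union, posG]
    rw [if_pos (posG_lt hv G₁)]
    exact ih
  | parR Δ G₁ ih =>
    simp only [GPat.fill, interpC_par, Graph.union, posG]
    rw [if_neg (by omega), show (interpC Δ).n + posG G₁ - (interpC Δ).n = posG G₁ by omega]
    exact ih

/-- Labels at non-hole positions are bindings of the skeleton. -/
lemma label_ne_posG {v : Binding α} (hv : v.unrB = false) (G : CtxPat α) :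
    ∀ i, i < (interpC (G.fill (GCtx.bind v))).n → i ≠ posG G →
      (interpC (G.fill (GCtx.bind v))).label i ∈ (G.fill GCtx.empty).toList := by
  induction G with
  | hole =>
    intro i hi hne
    rw [GPat.fill, interpC_bind_ord hv] at hi
    have hi1 : i < 1 := hi
    exact absurd (show i = posG GPat.hole by simp only [posG]; omega) hne
  | commaL G₁ Δ ih =>
    intro i hi hne
    simp only [GPat.fill, interpC_comma, Graph.join, posG] at hi hne ⊢
    simp only [GCtx.toList, List.mem_append]
    by_cases hc : i < (interpC (G₁.fill (GCtx.bind v))).n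
    · rw [if_pos hc]; exact Or.inl (ih i hc hne)
    · rw [if_neg hc]; exact Or.inr (mem_toList_of_label Δ _ (by omega))
  | commaR Δ G₁ ih =>
    intro i hi hne
    simp only [GPat.fill, interpC_comma, Graph.join, posG] at hi hne ⊢
    simp only [GCtx.toList, List.mem_append]
    by_cases hc : i < (interpC Δ).n
    · rw [if_pos hc]; exact Or.inl (mem_toList_of_label Δ _ hc)
    · rw [if_neg hc]
      exact Or.inr (ih _ (by omega) (by omega))
  | parL G₁ Δ ih =>
    intro i hi hne
    simp only [GPat.fill, interpC_par, Graph.union, posG] at hi hne ⊢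
    simp only [GCtx.toList, List.mem_append]
    by_cases hc : i < (interpC (G₁.fill (GCtx.bind v))).n
    · rw [if_pos hc]; exact Or.inl (ih i hc hne)
    · rw [if_neg hc]; exact Or.inr (mem_toList_of_label Δ _ (by omega))
  | parR Δ G₁ ih =>
    intro i hi hne
    simp only [GPat.fill, interpC_par, Graph.union, posG] at hi hne ⊢
    simp only [GCtx.toList, List.mem_append]
    by_cases hc : i < (interpC Δ).n
    · rw [if_pos hc]; exact Or.inl (mem_toList_of_label Δ _ hc)
    · rw [if_neg hc]
      exact Or.inr (ih _ (by omega) (by omega))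

/-- Any ordered skeleton binding occurs as a label at a non-hole position. -/
lemma exists_index_ne_posG {v b : Binding α} (hv : v.unrB = false)
    (hb : b.unrB = false) (G : CtxPat α)
    (hmem : b ∈ (G.fill GCtx.empty).toList) :
    ∃ i, i < (interpC (G.fill (GCtx.bind v))).n ∧ i ≠ posG G ∧
      (interpC (G.fill (GCtx.bind v))).label i = b := by
  induction G with
  | hole => simp [GPat.fill, GCtx.toList] at hmem
  | commaL G₁ Δ ih =>
    simp only [GPat.fill, GCtx.toList, List.mem_append] at hmem
    simp only [GPat.fill, interpC_comma, Graph.join, posG]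
    rcases hmem with h | h
    · obtain ⟨i, hi, hne, hl⟩ := ih h
      exact ⟨i, by omega, hne, by rw [if_pos hi]; exact hl⟩
    · obtain ⟨i, hi, hl⟩ := label_of_mem_toList_ord h hb
      refine ⟨(interpC (G₁.fill (GCtx.bind v))).n + i, by omega,
        by have := posG_lt hv G₁; omega, ?_⟩
      rw [if_neg (by omega), show (interpC (G₁.fill (GCtx.bind v))).n + i -
        (interpC (G₁.fill (GCtx.bind v))).n = i by omega]
      exact hl
  | commaR Δ G₁ ih =>
    simp only [GPat.fill, GCtx.toList, List.mem_append] at hmem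
    simp only [GPat.fill, interpC_comma, Graph.join, posG]
    rcases hmem with h | h
    · obtain ⟨i, hi, hl⟩ := label_of_mem_toList_ord h hb
      exact ⟨i, by omega, by omega, by rw [if_pos hi]; exact hl⟩
    · obtain ⟨i, hi, hne, hl⟩ := ih h
      refine ⟨(interpC Δ).n + i, by omega, by omega, ?_⟩
      rw [if_neg (by omega), show (interpC Δ).n + i - (interpC Δ).n = i by omega]
      exact hl
  | parL G₁ Δ ih =>
    simp only [GPat.fill, GCtx.toList, List.mem_append] at hmem
    simp only [GPat.fill, interpC_par, Graph.union, posG]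
    rcases hmem with h | h
    · obtain ⟨i, hi, hne, hl⟩ := ih h
      exact ⟨i, by omega, hne, by rw [if_pos hi]; exact hl⟩
    · obtain ⟨i, hi, hl⟩ := label_of_mem_toList_ord h hb
      refine ⟨(interpC (G₁.fill (GCtx.bind v))).n + i, by omega,
        by have := posG_lt hv G₁; omega, ?_⟩
      rw [if_neg (by omega), show (interpC (G₁.fill (GCtx.bind v))).n + i -
        (interpC (G₁.fill (GCtx.bind v))).n = i by omega]
      exact hl
  | parR Δ G₁ ih =>
    simp only [GPat.fill, GCtx.toList, List.mem_append] at hmem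
    simp only [GPat.fill, interpC_par, Graph.union, posG]
    rcases hmem with h | h
    · obtain ⟨i, hi, hl⟩ := label_of_mem_toList_ord h hb
      exact ⟨i, by omega, by omega, by rw [if_pos hi]; exact hl⟩
    · obtain ⟨i, hi, hne, hl⟩ := ih h
      refine ⟨(interpC Δ).n + i, by omega, by omega, ?_⟩
      rw [if_neg (by omega), show (interpC Δ).n + i - (interpC Δ).n = i by omega]
      exact hl

lemma Graph.ExtEq.substV {H H' K : Graph B} (h : H.ExtEq H') (p : ℕ) (hp : p < H.n) :
    (H.substV p K).ExtEq (H'.substV p K) := by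
  obtain ⟨hn, hl, he⟩ := h
  refine ⟨by simp [Graph.substV, hn], ?_, ?_⟩
  · intro i hi
    simp only [Graph.substV] at hi ⊢
    split_ifs with h1 h2
    · exact hl i (by omega)
    · rfl
    · exact hl _ (by omega)
  · intro i j
    simp only [Graph.substV, hn, he]

/-- The interpretation of `𝒢[Δ]` is the graph of `𝒢[v]` with the vertex at the
hole position replaced by the graph of `Δ`. -/
lemma fill_substV {v : Binding α} (hv : v.unrB = false) (G : CtxPat α) (Δ : Ctx α) :
    (interpC (G.fill Δ)).ExtEq
      ((interpC (G.fill (GCtx.bind v))).substV (posG G) (interpC Δ)) := by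
  induction G with
  | hole =>
    show (interpC Δ).ExtEq ((interpC (GCtx.bind v)).substV 0 (interpC Δ))
    rw [interpC_bind_ord hv]
    refine ⟨by simp only [Graph.substV]; omega, ?_, ?_⟩
    · intro i hi
      simp only [Graph.substV]
      rw [if_neg (Nat.not_lt_zero i), if_pos (by omega)]
      simp
    · intro i j
      simp only [Graph.substV]
      constructor
      · intro h
        have := (interpC Δ).edge_lt _ _ h
        exact ⟨by omega, by omega, Or.inr (Or.inr (Or.inr
          ⟨⟨Nat.zero_le _, by omega⟩, ⟨Nat.zero_le _, by omega⟩, by simpa using h⟩))⟩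
      · rintro ⟨hi, hj, hD⟩
        rcases hD with ⟨_, _, hH⟩ | ⟨_, _, hH⟩ | ⟨_, _, hH⟩ | ⟨_, _, hK⟩
        · exact hH.elim
        · exact hH.elim
        · exact hH.elim
        · simpa using hK
  | commaL G₁ Δ₂ ih =>
    show ((interpC (G₁.fill Δ)).join (interpC Δ₂)).ExtEq
      (((interpC (G₁.fill (GCtx.bind v))).join (interpC Δ₂)).substV (posG G₁) (interpC Δ))
    refine ((extEq_join_comb _ _).trans ?_)
    refine ((Graph.ExtEq.comb (ih) (Graph.ExtEq.refl _)).trans ?_)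
    refine ((substV_comb_left True _ _ _ _ (posG_lt hv G₁)).trans ?_)
    exact Graph.ExtEq.substV (extEq_join_comb _ _).symm _
      (by simp only [Graph.comb]; have := posG_lt hv G₁; omega)
  | commaR Δ₂ G₁ ih =>
    show ((interpC Δ₂).join (interpC (G₁.fill Δ))).ExtEq
      (((interpC Δ₂).join (interpC (G₁.fill (GCtx.bind v)))).substV
        ((interpC Δ₂).n + posG G₁) (interpC Δ))
    refine ((extEq_join_comb _ _).trans ?_)
    refine ((Graph.ExtEq.comb (Graph.ExtEq.refl _) ih).trans ?_)
    refine ((substV_comb_right True _ _ _ _ (posG_lt hv G₁)).trans ?_)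
    exact Graph.ExtEq.substV (extEq_join_comb _ _).symm _
      (by simp only [Graph.comb]; have := posG_lt hv G₁; omega)
  | parL G₁ Δ₂ ih =>
    show ((interpC (G₁.fill Δ)).union (interpC Δ₂)).ExtEq
      (((interpC (G₁.fill (GCtx.bind v))).union (interpC Δ₂)).substV (posG G₁) (interpC Δ))
    refine ((extEq_union_comb _ _).trans ?_)
    refine ((Graph.ExtEq.comb (ih) (Graph.ExtEq.refl _)).trans ?_)
    refine ((substV_comb_left False _ _ _ _ (posG_lt hv G₁)).trans ?_)
    exact Graph.ExtEq.substV (extEq_union_comb _ _).symm _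
      (by simp only [Graph.comb]; have := posG_lt hv G₁; omega)
  | parR Δ₂ G₁ ih =>
    show ((interpC Δ₂).union (interpC (G₁.fill Δ))).ExtEq
      (((interpC Δ₂).union (interpC (G₁.fill (GCtx.bind v)))).substV
        ((interpC Δ₂).n + posG G₁) (interpC Δ))
    refine ((extEq_union_comb _ _).trans ?_)
    refine ((Graph.ExtEq.comb (Graph.ExtEq.refl _) ih).trans ?_)
    refine ((substV_comb_right False _ _ _ _ (posG_lt hv G₁)).trans ?_)
    exact Graph.ExtEq.substV (extEq_union_comb _ _).symm _
      (by simp only [Graph.comb]; have := posG_lt hv G₁; omega)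

end Aux6
section Aux7

variable {B : Type}

/-- The bijection witnessing `GChar` after substituting a graph for a vertex. -/
def substMap (g : ℕ → ℕ) (pA pA' k : ℕ) (i : ℕ) : ℕ :=
  if i < pA' then (if g i < pA then g i else g i + k - 1)
  else if i < pA' + k then pA + (i - pA')
  else if g (i - k + 1) < pA then g (i - k + 1) else g (i - k + 1) + k - 1

lemma gchar_substV {A A' K : Graph B} {pA pA' : ℕ}
    (h : GChar A A') (hpA : pA < A.n) (hpA' : pA' < A'.n)
    (huniq : ∀ i, i < A.n → A.label i = A'.label pA' → i = pA) :
    GChar (A.substV pA K) (A'.substV pA' K) := by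
  obtain ⟨hn, g, hb, hinj, hsurj, hl, he⟩ := h
  have hgp : g pA' = pA := huniq _ (hb _ hpA') (hl _ hpA')
  have hne : ∀ o, o < A'.n → o ≠ pA' → g o ≠ pA := by
    intro o ho hno hemp
    exact hno (hinj o pA' ho hpA' (by rw [hemp, hgp]))
  -- decoding facts about substMap
  have main : ∀ i, i < A'.n - 1 + K.n → ¬(pA' ≤ i ∧ i < pA' + K.n) →
      ∃ o, o < A'.n ∧ o ≠ pA' ∧ (if i < pA' then i else i - K.n + 1) = o ∧
        (if substMap g pA pA' K.n i < pA then substMap g pA pA' K.n i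
          else substMap g pA pA' K.n i - K.n + 1) = g o ∧
        (substMap g pA pA' K.n i < pA ∨ pA + K.n ≤ substMap g pA pA' K.n i) := by
    intro i hi hnb
    by_cases c1 : i < pA'
    · have h0 : i < A'.n := by omega
      have h2 : g i ≠ pA := hne _ h0 (by omega)
      have h1 : g i < A.n := hb _ h0
      have hsm : substMap g pA pA' K.n i
          = if g i < pA then g i else g i + K.n - 1 := by
        unfold substMap; rw [if_pos c1]
      refine ⟨i, h0, by omega, by rw [if_pos c1], ?_, ?_⟩
      · rcases lt_or_ge (g i) pA with c | c
        · rw [hsm, if_pos c, if_pos c]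
        · rw [hsm, if_neg (show ¬ g i < pA by omega), if_neg (by omega)]
          omega
      · rcases lt_or_ge (g i) pA with c | c
        · rw [hsm, if_pos c]; exact Or.inl c
        · rw [hsm, if_neg (by omega)]; right; omega
    · have c2 : pA' + K.n ≤ i := by omega
      have h0 : i - K.n + 1 < A'.n := by omega
      have h2 : g (i - K.n + 1) ≠ pA := hne _ h0 (by omega)
      have h1 : g (i - K.n + 1) < A.n := hb _ h0
      have hsm : substMap g pA pA' K.n i
          = if g (i - K.n + 1) < pA then g (i - K.n + 1) else g (i - K.n + 1) + K.n - 1 := by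
        unfold substMap; rw [if_neg c1, if_neg (by omega)]
      refine ⟨i - K.n + 1, h0, by omega, by rw [if_neg c1], ?_, ?_⟩
      · rcases lt_or_ge (g (i - K.n + 1)) pA with c | c
        · rw [hsm, if_pos c, if_pos c]
        · rw [hsm, if_neg (show ¬ g (i - K.n + 1) < pA by omega), if_neg (by omega)]; omega
      · rcases lt_or_ge (g (i - K.n + 1)) pA with c | c
        · rw [hsm, if_pos c]; exact Or.inl c
        · rw [hsm, if_neg (by omega)]; right; omega
  have hblk : ∀ i, pA' ≤ i → i < pA' + K.n → substMap g pA pA' K.n i = pA + (i - pA') := by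
    intro i h1 h2
    unfold substMap
    rw [if_neg (by omega), if_pos (by omega)]
  refine ⟨by simp only [Graph.substV]; omega, substMap g pA pA' K.n, ?_, ?_, ?_, ?_, ?_⟩
  · -- bounds
    intro i hi
    simp only [Graph.substV] at hi ⊢
    by_cases c : pA' ≤ i ∧ i < pA' + K.n
    · rw [hblk i c.1 c.2]; omega
    · obtain ⟨o, ho, hno, _, hval, hreg⟩ := main i hi c
      have h1 : g o < A.n := hb _ ho
      have h2 : g o ≠ pA := hne _ ho hno
      rcases hreg with hr | hr
      · rw [if_pos hr] at hval; omega
      · rw [if_neg (by omega)] at hval; omega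
  · -- injectivity
    intro i j hi hj heq
    simp only [Graph.substV] at hi hj
    by_cases ci : pA' ≤ i ∧ i < pA' + K.n <;> by_cases cj : pA' ≤ j ∧ j < pA' + K.n
    · rw [hblk i ci.1 ci.2, hblk j cj.1 cj.2] at heq; omega
    · obtain ⟨o, ho, hno, _, hval, hreg⟩ := main j hj cj
      rw [hblk i ci.1 ci.2] at heq
      exfalso
      have h2 : g o ≠ pA := hne _ ho hno
      have h1 : g o < A.n := hb _ ho
      rcases hreg with hr | hr
      · omega
      · omega
    · obtain ⟨o, ho, hno, _, hval, hreg⟩ := main i hi ci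
      rw [hblk j cj.1 cj.2] at heq
      exfalso
      have h2 : g o ≠ pA := hne _ ho hno
      have h1 : g o < A.n := hb _ ho
      rcases hreg with hr | hr
      · omega
      · omega
    · obtain ⟨oi, hoi, hnoi, hdi, hvi, hri⟩ := main i hi ci
      obtain ⟨oj, hoj, hnoj, hdj, hvj, hrj⟩ := main j hj cj
      have h2i : g oi ≠ pA := hne _ hoi hnoi
      have h2j : g oj ≠ pA := hne _ hoj hnoj
      have h1i : g oi < A.n := hb _ hoi
      have h1j : g oj < A.n := hb _ hoj
      have hgg : g oi = g oj := by
        rcases hri with hr | hr <;> rcases hrj with hs | hs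
        · rw [if_pos hr] at hvi; rw [if_pos hs] at hvj; omega
        · rw [if_pos hr] at hvi; rw [if_neg (by omega)] at hvj; omega
        · rw [if_neg (by omega)] at hvi; rw [if_pos hs] at hvj; omega
        · rw [if_neg (by omega)] at hvi; rw [if_neg (by omega)] at hvj; omega
      have hoo : oi = oj := hinj _ _ hoi hoj hgg
      -- recover i = j from decodes
      by_cases di : i < pA' <;> by_cases dj : j < pA'
      · rw [if_pos di] at hdi; rw [if_pos dj] at hdj; omega
      · rw [if_pos di] at hdi; rw [if_neg dj] at hdj; omega
      · rw [if_neg di] at hdi; rw [if_pos dj] at hdj; omega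
      · rw [if_neg di] at hdi; rw [if_neg dj] at hdj; omega
  · -- surjectivity
    intro j hj
    simp only [Graph.substV] at hj ⊢
    by_cases c1 : j < pA
    · obtain ⟨i₀, hi₀, hgi⟩ := hsurj j (by omega)
      have hne' : i₀ ≠ pA' := by intro hcon; rw [hcon, hgp] at hgi; omega
      by_cases c2 : i₀ < pA'
      · refine ⟨i₀, by omega, ?_⟩
        unfold substMap
        rw [if_pos c2, if_pos (by omega)]
        exact hgi
      · refine ⟨i₀ + K.n - 1, by omega, ?_⟩
        unfold substMap
        rw [if_neg (by omega), if_neg (by omega),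
          show i₀ + K.n - 1 - K.n + 1 = i₀ by omega, if_pos (by omega)]
        exact hgi
    · by_cases c2 : j < pA + K.n
      · refine ⟨pA' + (j - pA), by omega, ?_⟩
        rw [hblk _ (by omega) (by omega)]
        omega
      · obtain ⟨i₀, hi₀, hgi⟩ := hsurj (j - K.n + 1) (by omega)
        have hne' : i₀ ≠ pA' := by intro hcon; rw [hcon, hgp] at hgi; omega
        by_cases c3 : i₀ < pA'
        · refine ⟨i₀, by omega, ?_⟩
          unfold substMap
          rw [if_pos c3, if_neg (by omega)]
          omega
        · refine ⟨i₀ + K.n - 1, by omega, ?_⟩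
          unfold substMap
          rw [if_neg (by omega), if_neg (by omega),
            show i₀ + K.n - 1 - K.n + 1 = i₀ by omega, if_neg (by omega)]
          omega
  · -- labels
    intro i hi
    simp only [Graph.substV] at hi ⊢
    by_cases c1 : i < pA'
    · have h0 : i < A'.n := by omega
      have h1 : g i < A.n := hb _ h0
      have h2 : g i ≠ pA := hne _ h0 (by omega)
      unfold substMap
      rw [if_pos c1]
      by_cases c2 : g i < pA
      · rw [if_pos c2, if_pos c2, if_pos c1]
        exact hl i h0
      · rw [if_neg c2, if_neg (by omega), if_neg (by omega), if_pos c1,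
          show g i + K.n - 1 - K.n + 1 = g i by omega]
        exact hl i h0
    · by_cases c2 : i < pA' + K.n
      · unfold substMap
        rw [if_neg c1, if_pos c2, if_neg (by omega), if_pos (by omega),
          if_neg c1, if_pos c2]
        congr 1
        omega
      · have h0 : i - K.n + 1 < A'.n := by omega
        have h1 : g (i - K.n + 1) < A.n := hb _ h0
        have h2 : g (i - K.n + 1) ≠ pA := hne _ h0 (by omega)
        unfold substMap
        rw [if_neg c1, if_neg c2]
        by_cases c3 : g (i - K.n + 1) < pA
        · rw [if_pos c3, if_pos c3, if_neg (by omega), if_neg (by omega)]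
          exact hl _ h0
        · rw [if_neg c3, if_neg (by omega), if_neg (by omega), if_neg (by omega),
            if_neg (by omega),
            show g (i - K.n + 1) + K.n - 1 - K.n + 1 = g (i - K.n + 1) by omega]
          exact hl _ h0
  · -- edges
    intro i j hi hj hE
    simp only [Graph.substV] at hi hj hE ⊢
    obtain ⟨hbi, hbj, hD⟩ := hE
    by_cases ci : pA' ≤ i ∧ i < pA' + K.n <;> by_cases cj : pA' ≤ j ∧ j < pA' + K.n
    · -- both block : BB
      rw [hblk i ci.1 ci.2] at hD hbi
      rw [hblk j cj.1 cj.2] at hD hbj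
      refine ⟨by omega, by omega, Or.inr (Or.inr (Or.inr ⟨⟨ci.1, ci.2⟩, ⟨cj.1, cj.2⟩, ?_⟩))⟩
      rcases hD with ⟨ri, _, _⟩ | ⟨ri, _, _⟩ | ⟨_, rj, _⟩ | ⟨_, _, hK⟩
      · exfalso; omega
      · exfalso; omega
      · exfalso; omega
      · rw [show pA + (i - pA') - pA = i - pA' by omega,
          show pA + (j - pA') - pA = j - pA' by omega] at hK
        exact hK
    · -- i block, j old : BO
      obtain ⟨oj, hoj, hnoj, hdj, hvj, hrj⟩ := main j hj cj
      rw [hblk i ci.1 ci.2] at hD hbi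
      have h1j : g oj < A.n := hb _ hoj
      have h2j : g oj ≠ pA := hne _ hoj hnoj
      refine ⟨by omega, by omega, Or.inr (Or.inr (Or.inl ⟨⟨ci.1, ci.2⟩, by omega, ?_⟩))⟩
      rw [hdj]
      rcases hD with ⟨ri, _, _⟩ | ⟨ri, _, _⟩ | ⟨_, rj, hH⟩ | ⟨_, bj, _⟩
      · exfalso; omega
      · exfalso; omega
      · rw [hvj, ← hgp] at hH
        exact he _ _ hpA' hoj hH
      · exfalso; omega
    · -- i old, j block : OB
      obtain ⟨oi, hoi, hnoi, hdi, hvi, hri⟩ := main i hi ci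
      rw [hblk j cj.1 cj.2] at hD hbj
      have h1i : g oi < A.n := hb _ hoi
      have h2i : g oi ≠ pA := hne _ hoi hnoi
      refine ⟨by omega, by omega, Or.inr (Or.inl ⟨by omega, ⟨cj.1, cj.2⟩, ?_⟩)⟩
      rw [hdi]
      rcases hD with ⟨ri, rj, _⟩ | ⟨ri, bj, hH⟩ | ⟨bi, _, _⟩ | ⟨bi, _, _⟩
      · exfalso; omega
      · rw [hvi, ← hgp] at hH
        exact he _ _ hoi hpA' hH
      · exfalso; omega
      · exfalso; omega
    · -- both old : OO
      obtain ⟨oi, hoi, hnoi, hdi, hvi, hri⟩ := main i hi ci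
      obtain ⟨oj, hoj, hnoj, hdj, hvj, hrj⟩ := main j hj cj
      have h1i : g oi < A.n := hb _ hoi
      have h2i : g oi ≠ pA := hne _ hoi hnoi
      have h1j : g oj < A.n := hb _ hoj
      have h2j : g oj ≠ pA := hne _ hoj hnoj
      refine ⟨by omega, by omega, Or.inl ⟨by omega, by omega, ?_⟩⟩
      rw [hdi, hdj]
      rcases hD with ⟨ri, rj, hH⟩ | ⟨ri, bj, _⟩ | ⟨bi, _, _⟩ | ⟨bi, _, _⟩
      · rw [hvi, hvj] at hH
        exact he _ _ hoi hoj hH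
      · exfalso; omega
      · exfalso; omega
      · exfalso; omega

end Aux7
section Aux8

variable {α : Type}

/-- Key lemma: substituting a context for the (unique, ordered) hole binding
preserves the subcontext relation, provided the hole graphs line up. -/
lemma subC_fill_subst {v : Binding α} (hv : v.unrB = false) {G G' : CtxPat α}
    (hsub : SubC (G.fill (GCtx.bind v)) (G'.fill (GCtx.bind v)))
    (hnv' : v ∉ (G.fill GCtx.empty).toList)
    (Δ : Ctx α) :
    SubC (G.fill Δ) (G'.fill Δ) := by
  obtain ⟨hchar, hunr⟩ := char_iff.mp hsub
  refine char_iff.mpr ⟨?_, ?_⟩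
  · have huniq : ∀ i, i < (interpC (G.fill (GCtx.bind v))).n →
        (interpC (G.fill (GCtx.bind v))).label i
          = (interpC (G'.fill (GCtx.bind v))).label (posG G') → i = posG G := by
      intro i hi hlab
      rw [label_posG hv G'] at hlab
      by_contra hne
      exact hnv' (hlab ▸ label_ne_posG hv G i hi hne)
    have h1 := gchar_substV hchar (posG_lt hv G) (posG_lt hv G') huniq (K := interpC Δ)
    exact gchar_trans (gchar_of_extEq (fill_substV hv G Δ))
      (gchar_trans h1 (gchar_of_extEq (fill_substV hv G' Δ).symm))
  · intro b hb
    rw [mem_unrSet_iff] at hb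
    obtain ⟨hbmem, hbu⟩ := hb
    rw [toList_fill, List.mem_append, List.mem_append] at hbmem
    rw [mem_unrSet_iff, toList_fill, List.mem_append, List.mem_append]
    rcases hbmem with (h | h) | h
    · -- in the prefix of G' : transfer through hsub
      have : b ∈ unrSetC (G'.fill (GCtx.bind v)) := by
        rw [mem_unrSet_iff, toList_fill]
        exact ⟨by simp [h], hbu⟩
      have h2 := hunr this
      rw [mem_unrSet_iff, toList_fill, List.mem_append, List.mem_append] at h2
      obtain ⟨h2m, _⟩ := h2
      rcases h2m with (h' | h') | h'
      · exact ⟨Or.inl (Or.inl h'), hbu⟩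
      · exfalso
        simp only [GCtx.toList, List.mem_singleton] at h'
        subst h'
        rw [hv] at hbu
        exact Bool.false_ne_true hbu
      · exact ⟨Or.inr h', hbu⟩
    · -- in Δ
      exact ⟨Or.inl (Or.inr h), hbu⟩
    · -- in the suffix of G'
      have : b ∈ unrSetC (G'.fill (GCtx.bind v)) := by
        rw [mem_unrSet_iff, toList_fill]
        exact ⟨by simp [h], hbu⟩
      have h2 := hunr this
      rw [mem_unrSet_iff, toList_fill, List.mem_append, List.mem_append] at h2
      obtain ⟨h2m, _⟩ := h2
      rcases h2m with (h' | h') | h'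
      · exact ⟨Or.inl (Or.inl h'), hbu⟩
      · exfalso
        simp only [GCtx.toList, List.mem_singleton] at h'
        subst h'
        rw [hv] at hbu
        exact Bool.false_ne_true hbu
      · exact ⟨Or.inr h', hbu⟩

lemma subC_vdom {Γ₂ Γ₁ : Ctx α} (h : SubC Γ₂ Γ₁) : vdom Γ₁ ⊆ vdom Γ₂ := by
  obtain ⟨⟨hn, g, hbd, hinj, hsurj, hl, he⟩, hunr⟩ := char_iff.mp h
  rintro x ⟨T, hmem⟩
  by_cases hu : (Binding.var x T).unrB = true
  · have : Binding.var x T ∈ unrSetC Γ₁ := mem_unrSet_iff.mpr ⟨hmem, hu⟩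
    have := mem_unrSet_iff.mp (hunr this)
    exact ⟨T, this.1⟩
  · obtain ⟨i, hi, hlab⟩ := label_of_mem_toList_ord hmem (by simpa using hu)
    have h1 : (interpC Γ₂).label (g i) = Binding.var x T := by
      rw [hl i hi, hlab]
    have h2 := mem_toList_of_label Γ₂ (g i) (hbd i hi)
    rw [h1] at h2
    exact ⟨T, h2⟩

lemma subC_isUnrCtx {Γ₂ Γ₁ : Ctx α} (h : SubC Γ₂ Γ₁) (hu : isUnrCtx Γ₁) :
    isUnrCtx Γ₂ := by
  obtain ⟨⟨hn, g, hbd, hinj, hsurj, hl, he⟩, hunr⟩ := char_iff.mp h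
  intro b hb
  by_contra hbu
  obtain ⟨i, hi, hlab⟩ := label_of_mem_toList_ord hb (by simpa using hbu)
  obtain ⟨i₀, hi₀, rfl⟩ := hsurj i hi
  have h1 : (interpC Γ₁).label i₀ = b := by rw [← hl i₀ hi₀, hlab]
  have h2 := mem_toList_of_label Γ₁ i₀ hi₀
  rw [h1] at h2
  exact hbu (hu b h2)

lemma isUnrCtx_n_zero {Γ : Ctx α} (h : isUnrCtx Γ) : (interpC Γ).n = 0 := by
  induction Γ with
  | empty => rfl
  | bind b =>
    have := h b (by simp [GCtx.toList])
    rw [interpC_bind_unr this]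
    rfl
  | comma Γ₁ Γ₂ ih₁ ih₂ =>
    simp only [interpC_comma, Graph.join]
    rw [ih₁ (fun b hb => h b (by simp [GCtx.toList, hb])),
      ih₂ (fun b hb => h b (by simp [GCtx.toList, hb]))]
  | par Γ₁ Γ₂ ih₁ ih₂ =>
    simp only [interpC_par, Graph.union]
    rw [ih₁ (fun b hb => h b (by simp [GCtx.toList, hb])),
      ih₂ (fun b hb => h b (by simp [GCtx.toList, hb]))]

lemma extEq_of_unr {Γ Γ' : Ctx α} (h : isUnrCtx Γ) (h' : isUnrCtx Γ') :
    (interpC Γ).ExtEq (interpC Γ') := by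
  refine ⟨by rw [isUnrCtx_n_zero h, isUnrCtx_n_zero h'], ?_, ?_⟩
  · intro i hi
    rw [isUnrCtx_n_zero h] at hi
    omega
  · intro i j
    constructor
    · intro he
      have := (interpC Γ).edge_lt _ _ he
      rw [isUnrCtx_n_zero h] at this
      omega
    · intro he
      have := (interpC Γ').edge_lt _ _ he
      rw [isUnrCtx_n_zero h'] at this
      omega

lemma exists_pattern_of_mem {Γ : Ctx α} {b : Binding α} (h : b ∈ Γ.toList) :
    ∃ Gp : CtxPat α, Γ = Gp.fill (GCtx.bind b) := by
  induction Γ with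
  | empty => simp [GCtx.toList] at h
  | bind b' =>
    simp only [GCtx.toList, List.mem_singleton] at h
    subst h
    exact ⟨GPat.hole, rfl⟩
  | comma Γ₁ Γ₂ ih₁ ih₂ =>
    simp only [GCtx.toList, List.mem_append] at h
    rcases h with h | h
    · obtain ⟨Gp, rfl⟩ := ih₁ h
      exact ⟨GPat.commaL Gp Γ₂, rfl⟩
    · obtain ⟨Gp, rfl⟩ := ih₂ h
      exact ⟨GPat.commaR Γ₁ Gp, rfl⟩
  | par Γ₁ Γ₂ ih₁ ih₂ =>
    simp only [GCtx.toList, List.mem_append] at h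
    rcases h with h | h
    · obtain ⟨Gp, rfl⟩ := ih₁ h
      exact ⟨GPat.parL Gp Γ₂, rfl⟩
    · obtain ⟨Gp, rfl⟩ := ih₂ h
      exact ⟨GPat.parR Γ₁ Gp, rfl⟩

lemma runtime_no_var {C : Ctx α} (hC : isRuntime C) (x : ℕ) (T : Ty α) :
    Binding.var x T ∉ C.toList := by
  intro h
  obtain ⟨l, m, heq⟩ := hC _ h
  cases heq

lemma runtime_unrSet {C : Ctx α} (hC : isRuntime C) : unrSetC C = ∅ := by
  ext b
  simp only [Set.mem_empty_iff_false, iff_false]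
  intro h
  obtain ⟨hb, hu⟩ := mem_unrSet_iff.mp h
  obtain ⟨l, m, rfl⟩ := hC _ hb
  simp [Binding.unrB] at hu

end Aux8
section Aux9

variable {α : Type} {B : Type}

/-- Erase every binding of the variable `x` from a context. -/
def eraseX (x : ℕ) : Ctx α → Ctx α
  | .empty => .empty
  | .bind (Binding.var y T) =>
      if y = x then .empty else .bind (Binding.var y T)
  | .bind (Binding.loc l m) => .bind (Binding.loc l m)
  | .comma Γ₁ Γ₂ => .comma (eraseX x Γ₁) (eraseX x Γ₂)
  | .par Γ₁ Γ₂ => .par (eraseX x Γ₁) (eraseX x Γ₂)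

lemma mem_toList_eraseX {x : ℕ} {Γ : Ctx α} {b : Binding α} :
    b ∈ (eraseX x Γ).toList ↔ b ∈ Γ.toList ∧ ∀ T, b ≠ Binding.var x T := by
  induction Γ with
  | empty => simp [eraseX, GCtx.toList]
  | bind b' =>
    cases b' with
    | var y T =>
      by_cases h : y = x
      · subst h
        simp only [eraseX, if_pos rfl, ↓reduceIte, GCtx.toList, List.not_mem_nil, false_iff,
          List.mem_singleton, not_and]
        rintro rfl h2
        exact (h2 T) rfl
      · simp only [eraseX, if_neg h, GCtx.toList, List.mem_singleton]
        constructor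
        · rintro rfl
          exact ⟨rfl, fun T' hT => h (by injection hT)⟩
        · rintro ⟨rfl, _⟩; rfl
    | loc l m =>
      simp only [eraseX, GCtx.toList, List.mem_singleton]
      constructor
      · rintro rfl
        exact ⟨rfl, fun T' hT => by cases hT⟩
      · rintro ⟨rfl, _⟩; rfl
  | comma Γ₁ Γ₂ ih₁ ih₂ =>
    simp only [eraseX, GCtx.toList, List.mem_append, ih₁, ih₂]
    tauto
  | par Γ₁ Γ₂ ih₁ ih₂ =>
    simp only [eraseX, GCtx.toList, List.mem_append, ih₁, ih₂]
    tauto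

lemma eraseX_id {x : ℕ} {Γ : Ctx α} (h : ∀ T, Binding.var x T ∉ Γ.toList) :
    eraseX x Γ = Γ := by
  induction Γ with
  | empty => rfl
  | bind b' =>
    cases b' with
    | var y T =>
      have : y ≠ x := by
        rintro rfl
        exact h T (by simp [GCtx.toList])
      simp [eraseX, this]
    | loc l m => rfl
  | comma Γ₁ Γ₂ ih₁ ih₂ =>
    simp only [GCtx.toList, List.mem_append] at h
    rw [eraseX, ih₁ (fun T hT => h T (Or.inl hT)), ih₂ (fun T hT => h T (Or.inr hT))]
  | par Γ₁ Γ₂ ih₁ ih₂ =>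
    simp only [GCtx.toList, List.mem_append] at h
    rw [eraseX, ih₁ (fun T hT => h T (Or.inl hT)), ih₂ (fun T hT => h T (Or.inr hT))]

lemma interp_eraseX {x : ℕ} {Γ : Ctx α}
    (h : ∀ T, Binding.var x T ∈ Γ.toList → T.unrB = true) :
    interpC (eraseX x Γ) = interpC Γ := by
  induction Γ with
  | empty => rfl
  | bind b' =>
    cases b' with
    | var y T =>
      by_cases hy : y = x
      · subst hy
        have hT := h T (by simp [GCtx.toList])
        rw [eraseX, if_pos rfl, interpC_bind_unr (by simpa [Binding.unrB] using hT)]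
        rfl
      · rw [eraseX, if_neg hy]
    | loc l m => rfl
  | comma Γ₁ Γ₂ ih₁ ih₂ =>
    simp only [GCtx.toList, List.mem_append] at h
    show ((interpC (eraseX x Γ₁)).join (interpC (eraseX x Γ₂))) = _
    rw [ih₁ (fun T hT => h T (Or.inl hT)), ih₂ (fun T hT => h T (Or.inr hT))]
    rfl
  | par Γ₁ Γ₂ ih₁ ih₂ =>
    simp only [GCtx.toList, List.mem_append] at h
    show ((interpC (eraseX x Γ₁)).union (interpC (eraseX x Γ₂))) = _
    rw [ih₁ (fun T hT => h T (Or.inl hT)), ih₂ (fun T hT => h T (Or.inr hT))]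
    rfl

lemma eraseX_fill_of_not_mem {x : ℕ} {G : CtxPat α}
    (h : ∀ T, Binding.var x T ∉ (G.fill GCtx.empty).toList) (Δ : Ctx α) :
    eraseX x (G.fill Δ) = G.fill (eraseX x Δ) := by
  induction G with
  | hole => rfl
  | commaL G₁ Δ₂ ih =>
    simp only [GPat.fill, GCtx.toList, List.mem_append] at h ⊢
    rw [eraseX, ih (fun T hT => h T (Or.inl hT)),
      eraseX_id (fun T hT => h T (Or.inr hT))]
  | commaR Δ₂ G₁ ih =>
    simp only [GPat.fill, GCtx.toList, List.mem_append] at h ⊢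
    rw [eraseX, ih (fun T hT => h T (Or.inr hT)),
      eraseX_id (fun T hT => h T (Or.inl hT))]
  | parL G₁ Δ₂ ih =>
    simp only [GPat.fill, GCtx.toList, List.mem_append] at h ⊢
    rw [eraseX, ih (fun T hT => h T (Or.inl hT)),
      eraseX_id (fun T hT => h T (Or.inr hT))]
  | parR Δ₂ G₁ ih =>
    simp only [GPat.fill, GCtx.toList, List.mem_append] at h ⊢
    rw [eraseX, ih (fun T hT => h T (Or.inr hT)),
      eraseX_id (fun T hT => h T (Or.inl hT))]

/-- Map `eraseX` over the fixed parts of a context pattern. -/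
def eraseXPat (x : ℕ) : CtxPat α → CtxPat α
  | .hole => .hole
  | .commaL G Δ => .commaL (eraseXPat x G) (eraseX x Δ)
  | .commaR Δ G => .commaR (eraseX x Δ) (eraseXPat x G)
  | .parL G Δ => .parL (eraseXPat x G) (eraseX x Δ)
  | .parR Δ G => .parR (eraseX x Δ) (eraseXPat x G)

lemma eraseX_fill (x : ℕ) (G : CtxPat α) (Δ : Ctx α) :
    eraseX x (G.fill Δ) = (eraseXPat x G).fill (eraseX x Δ) := by
  induction G with
  | hole => rfl
  | commaL G₁ Δ₂ ih => simp only [GPat.fill, eraseXPat, eraseX, ih]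
  | commaR Δ₂ G₁ ih => simp only [GPat.fill, eraseXPat, eraseX, ih]
  | parL G₁ Δ₂ ih => simp only [GPat.fill, eraseXPat, eraseX, ih]
  | parR Δ₂ G₁ ih => simp only [GPat.fill, eraseXPat, eraseX, ih]

end Aux9
section Aux10

variable {B : Type}

/-- Decomposition of two fillings of the same context: either the `bind`-hole of
`G` lies inside `Γ`, or the two holes are disjoint. -/
lemma fill_decompose (G₀ : GPat B) (G : GPat B) (b : B) (Γ : GCtx B)
    (heq : G.fill (GCtx.bind b) = G₀.fill Γ) :
    (∃ G' : GPat B, Γ = G'.fill (GCtx.bind b) ∧ ∀ Δ, G.fill Δ = G₀.fill (G'.fill Δ)) ∨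
    (∃ F : GCtx B → GCtx B → GCtx B,
      (∀ Δ, G.fill Δ = F Δ Γ) ∧
      (∀ Δ, G₀.fill Δ = F (GCtx.bind b) Δ) ∧
      (∀ Δ₁, ∃ Gp : GPat B, ∀ Δ₂, Gp.fill Δ₂ = F Δ₁ Δ₂) ∧
      (∀ Δ₂, ∃ Gp : GPat B, ∀ Δ₁, Gp.fill Δ₁ = F Δ₁ Δ₂) ∧
      (∃ pre mid suf : List B, ∀ Δ₁ Δ₂ c, c ∈ (F Δ₁ Δ₂).toList ↔
        c ∈ pre ∨ c ∈ Δ₁.toList ∨ c ∈ mid ∨ c ∈ Δ₂.toList ∨ c ∈ suf)) := by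
  induction G₀ generalizing G with
  | hole =>
    exact Or.inl ⟨G, heq.symm, fun Δ => rfl⟩
  | commaL G₁ Δ₂ ih =>
    cases G with
    | hole => simp only [GPat.fill] at heq; cases heq
    | commaL G₂ Δ₂' =>
      simp only [GPat.fill] at heq
      injection heq with h1 h2
      subst h2
      rcases ih G₂ h1 with ⟨G'', hΓ, hcomm⟩ | ⟨F, hF1, hF2, hF3, hF4, pre, mid, suf, hmem⟩
      · refine Or.inl ⟨G'', hΓ, fun Δ => ?_⟩
        simp only [GPat.fill, hcomm Δ]
      · refine Or.inr ⟨fun Δ₁ Δ => GCtx.comma (F Δ₁ Δ) Δ₂', ?_, ?_, ?_, ?_,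
          pre, mid, suf ++ Δ₂'.toList, ?_⟩
        · intro Δ; simp only [GPat.fill, hF1 Δ]
        · intro Δ; simp only [GPat.fill, hF2 Δ]
        · intro Δ₁
          obtain ⟨Gp, hGp⟩ := hF3 Δ₁
          exact ⟨GPat.commaL Gp Δ₂', fun Δ => by simp only [GPat.fill, hGp Δ]⟩
        · intro Δ
          obtain ⟨Gp, hGp⟩ := hF4 Δ
          exact ⟨GPat.commaL Gp Δ₂', fun Δ₁ => by simp only [GPat.fill, hGp Δ₁]⟩
        · intro Δ₁ Δ c
          simp only [GCtx.toList, List.mem_append, hmem Δ₁ Δ c]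
          tauto
    | commaR Δ₁' G₂ =>
      simp only [GPat.fill] at heq
      injection heq with h1 h2
      refine Or.inr ⟨fun Δ₁ Δ => GCtx.comma (G₁.fill Δ) (G₂.fill Δ₁), ?_, ?_, ?_, ?_,
        G₁.pre, G₁.suf ++ G₂.pre, G₂.suf, ?_⟩
      · intro Δ; simp only [GPat.fill, h1]
      · intro Δ; simp only [GPat.fill, h2]
      · intro Δ₁
        exact ⟨GPat.commaL G₁ (G₂.fill Δ₁), fun Δ => rfl⟩
      · intro Δ
        exact ⟨GPat.commaR (G₁.fill Δ) G₂, fun Δ₁ => rfl⟩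
      · intro Δ₁ Δ c
        simp only [GCtx.toList, List.mem_append, toList_fill]
        tauto
    | parL G₂ Δ₂' => simp only [GPat.fill] at heq; cases heq
    | parR Δ₁' G₂ => simp only [GPat.fill] at heq; cases heq
  | commaR Δ₂ G₁ ih =>
    cases G with
    | hole => simp only [GPat.fill] at heq; cases heq
    | commaR Δ₁' G₂ =>
      simp only [GPat.fill] at heq
      injection heq with h1 h2
      subst h1
      rcases ih G₂ h2 with ⟨G'', hΓ, hcomm⟩ | ⟨F, hF1, hF2, hF3, hF4, pre, mid, suf, hmem⟩
      · refine Or.inl ⟨G'', hΓ, fun Δ => ?_⟩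
        simp only [GPat.fill, hcomm Δ]
      · refine Or.inr ⟨fun Δ₁ Δ => GCtx.comma Δ₁' (F Δ₁ Δ), ?_, ?_, ?_, ?_,
          Δ₁'.toList ++ pre, mid, suf, ?_⟩
        · intro Δ; simp only [GPat.fill, hF1 Δ]
        · intro Δ; simp only [GPat.fill, hF2 Δ]
        · intro Δ₁
          obtain ⟨Gp, hGp⟩ := hF3 Δ₁
          exact ⟨GPat.commaR Δ₁' Gp, fun Δ => by simp only [GPat.fill, hGp Δ]⟩
        · intro Δ
          obtain ⟨Gp, hGp⟩ := hF4 Δ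
          exact ⟨GPat.commaR Δ₁' Gp, fun Δ₁ => by simp only [GPat.fill, hGp Δ₁]⟩
        · intro Δ₁ Δ c
          simp only [GCtx.toList, List.mem_append, hmem Δ₁ Δ c]
          tauto
    | commaL G₂ Δ₂' =>
      simp only [GPat.fill] at heq
      injection heq with h1 h2
      refine Or.inr ⟨fun Δ₁ Δ => GCtx.comma (G₂.fill Δ₁) (G₁.fill Δ), ?_, ?_, ?_, ?_,
        G₂.pre, G₂.suf ++ G₁.pre, G₁.suf, ?_⟩
      · intro Δ; simp only [GPat.fill, h2]
      · intro Δ; simp only [GPat.fill, h1]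
      · intro Δ₁
        exact ⟨GPat.commaR (G₂.fill Δ₁) G₁, fun Δ => rfl⟩
      · intro Δ
        exact ⟨GPat.commaL G₂ (G₁.fill Δ), fun Δ₁ => rfl⟩
      · intro Δ₁ Δ c
        simp only [GCtx.toList, List.mem_append, toList_fill]
        tauto
    | parL G₂ Δ₂' => simp only [GPat.fill] at heq; cases heq
    | parR Δ₁' G₂ => simp only [GPat.fill] at heq; cases heq
  | parL G₁ Δ₂ ih =>
    cases G with
    | hole => simp only [GPat.fill] at heq; cases heq
    | parL G₂ Δ₂' =>
      simp only [GPat.fill] at heq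
      injection heq with h1 h2
      subst h2
      rcases ih G₂ h1 with ⟨G'', hΓ, hcomm⟩ | ⟨F, hF1, hF2, hF3, hF4, pre, mid, suf, hmem⟩
      · refine Or.inl ⟨G'', hΓ, fun Δ => ?_⟩
        simp only [GPat.fill, hcomm Δ]
      · refine Or.inr ⟨fun Δ₁ Δ => GCtx.par (F Δ₁ Δ) Δ₂', ?_, ?_, ?_, ?_,
          pre, mid, suf ++ Δ₂'.toList, ?_⟩
        · intro Δ; simp only [GPat.fill, hF1 Δ]
        · intro Δ; simp only [GPat.fill, hF2 Δ]
        · intro Δ₁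
          obtain ⟨Gp, hGp⟩ := hF3 Δ₁
          exact ⟨GPat.parL Gp Δ₂', fun Δ => by simp only [GPat.fill, hGp Δ]⟩
        · intro Δ
          obtain ⟨Gp, hGp⟩ := hF4 Δ
          exact ⟨GPat.parL Gp Δ₂', fun Δ₁ => by simp only [GPat.fill, hGp Δ₁]⟩
        · intro Δ₁ Δ c
          simp only [GCtx.toList, List.mem_append, hmem Δ₁ Δ c]
          tauto
    | parR Δ₁' G₂ =>
      simp only [GPat.fill] at heq
      injection heq with h1 h2
      refine Or.inr ⟨fun Δ₁ Δ => GCtx.par (G₁.fill Δ) (G₂.fill Δ₁), ?_, ?_, ?_, ?_,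
        G₁.pre, G₁.suf ++ G₂.pre, G₂.suf, ?_⟩
      · intro Δ; simp only [GPat.fill, h1]
      · intro Δ; simp only [GPat.fill, h2]
      · intro Δ₁
        exact ⟨GPat.parL G₁ (G₂.fill Δ₁), fun Δ => rfl⟩
      · intro Δ
        exact ⟨GPat.parR (G₁.fill Δ) G₂, fun Δ₁ => rfl⟩
      · intro Δ₁ Δ c
        simp only [GCtx.toList, List.mem_append, toList_fill]
        tauto
    | commaL G₂ Δ₂' => simp only [GPat.fill] at heq; cases heq
    | commaR Δ₁' G₂ => simp only [GPat.fill] at heq; cases heq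
  | parR Δ₂ G₁ ih =>
    cases G with
    | hole => simp only [GPat.fill] at heq; cases heq
    | parR Δ₁' G₂ =>
      simp only [GPat.fill] at heq
      injection heq with h1 h2
      subst h1
      rcases ih G₂ h2 with ⟨G'', hΓ, hcomm⟩ | ⟨F, hF1, hF2, hF3, hF4, pre, mid, suf, hmem⟩
      · refine Or.inl ⟨G'', hΓ, fun Δ => ?_⟩
        simp only [GPat.fill, hcomm Δ]
      · refine Or.inr ⟨fun Δ₁ Δ => GCtx.par Δ₁' (F Δ₁ Δ), ?_, ?_, ?_, ?_,
          Δ₁'.toList ++ pre, mid, suf, ?_⟩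
        · intro Δ; simp only [GPat.fill, hF1 Δ]
        · intro Δ; simp only [GPat.fill, hF2 Δ]
        · intro Δ₁
          obtain ⟨Gp, hGp⟩ := hF3 Δ₁
          exact ⟨GPat.parR Δ₁' Gp, fun Δ => by simp only [GPat.fill, hGp Δ]⟩
        · intro Δ
          obtain ⟨Gp, hGp⟩ := hF4 Δ
          exact ⟨GPat.parR Δ₁' Gp, fun Δ₁ => by simp only [GPat.fill, hGp Δ₁]⟩
        · intro Δ₁ Δ c
          simp only [GCtx.toList, List.mem_append, hmem Δ₁ Δ c]
          tauto
    | parL G₂ Δ₂' =>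
      simp only [GPat.fill] at heq
      injection heq with h1 h2
      refine Or.inr ⟨fun Δ₁ Δ => GCtx.par (G₂.fill Δ₁) (G₁.fill Δ), ?_, ?_, ?_, ?_,
        G₂.pre, G₂.suf ++ G₁.pre, G₁.suf, ?_⟩
      · intro Δ; simp only [GPat.fill, h2]
      · intro Δ; simp only [GPat.fill, h1]
      · intro Δ₁
        exact ⟨GPat.parR (G₂.fill Δ₁) G₁, fun Δ => rfl⟩
      · intro Δ
        exact ⟨GPat.parL G₂ (G₁.fill Δ), fun Δ₁ => rfl⟩
      · intro Δ₁ Δ c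
        simp only [GCtx.toList, List.mem_append, toList_fill]
        tauto
    | commaL G₂ Δ₂' => simp only [GPat.fill] at heq; cases heq
    | commaR Δ₁' G₂ => simp only [GPat.fill] at heq; cases heq

end Aux10
section Aux11

variable {α : Type}

lemma mem_vdom_fill (G : CtxPat α) (x : ℕ) (S : Ty α) :
    x ∈ vdom (G.fill (GCtx.bind (Binding.var x S))) := by
  refine ⟨S, ?_⟩
  rw [toList_fill]
  simp [GCtx.toList]

lemma not_mem_vdom_comma {Γ₁ Γ₂ : Ctx α} {x : ℕ}
    (h : x ∉ vdom (GCtx.comma Γ₁ Γ₂)) : x ∉ vdom Γ₁ ∧ x ∉ vdom Γ₂ := by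
  constructor <;> rintro ⟨T, hT⟩ <;> exact h ⟨T, by simp [GCtx.toList, hT]⟩

lemma not_mem_vdom_par {Γ₁ Γ₂ : Ctx α} {x : ℕ}
    (h : x ∉ vdom (GCtx.par Γ₁ Γ₂)) : x ∉ vdom Γ₁ ∧ x ∉ vdom Γ₂ := by
  constructor <;> rintro ⟨T, hT⟩ <;> exact h ⟨T, by simp [GCtx.toList, hT]⟩

/-- Well-typed terms have no free occurrence of variables outside the context. -/
lemma subst_id {P : OPM α} {Γ : Ctx α} {M : Expr α} {T : Ty α} {e : Bool}
    (h : Typing P Γ M T e) : ∀ x V, x ∉ vdom Γ → subst M V x = M := by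
  induction h with
  | unit => intro x V _; rfl
  | new m => intro x V _; rfl
  | op m₀ m₁ m₂ _ => intro x V _; rfl
  | split m₀ m₁ m₂ _ => intro x V _; rfl
  | drop m _ => intro x V _; rfl
  | var x' T => 
    intro x V hx
    have hne : x' ≠ x := by
      rintro rfl
      exact hx ⟨T, by simp [GCtx.toList]⟩
    simp only [subst, if_neg hne]
  | loc l m => intro x V _; rfl
  | abs Γ x' S T M e hx' hunr hM ih =>
    intro x V hx
    simp only [subst]
    by_cases hc : x' = x
    · rw [if_pos hc]
    · rw [if_neg hc, ih x V]
      rintro ⟨T', hT'⟩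
      simp only [GCtx.toList, List.mem_append, List.mem_singleton] at hT'
      rcases hT' with h' | h'
      · exact hx ⟨T', h'⟩
      · injection h' with h1 _
        exact hc h1.symm
  | uabs Γ x' S T M e hx' hM ih =>
    intro x V hx
    simp only [subst]
    by_cases hc : x' = x
    · rw [if_pos hc]
    · rw [if_neg hc, ih x V]
      rintro ⟨T', hT'⟩
      simp only [GCtx.toList, List.mem_append, List.mem_singleton] at hT'
      rcases hT' with h' | h'
      · exact hx ⟨T', h'⟩
      · injection h' with h1 _
        exact hc h1.symm
  | rabs Γ x' S T M e hx' hM ih =>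
    intro x V hx
    simp only [subst]
    by_cases hc : x' = x
    · rw [if_pos hc]
    · rw [if_neg hc, ih x V]
      rintro ⟨T', hT'⟩
      simp only [GCtx.toList, List.mem_append, List.mem_singleton] at hT'
      rcases hT' with h' | h'
      · exact hx ⟨T', h'⟩
      · injection h' with h1 _
        exact hc h1.symm
  | labs Γ x' S T M e hx' hM ih =>
    intro x V hx
    simp only [subst]
    by_cases hc : x' = x
    · rw [if_pos hc]
    · rw [if_neg hc, ih x V]
      rintro ⟨T', hT'⟩
      simp only [GCtx.toList, List.mem_append, List.mem_singleton] at hT'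
      rcases hT' with h' | h'
      · injection h' with h1 _
        exact hc h1.symm
      · exact hx ⟨T', h'⟩
  | app Γ₁ Γ₂ M N S T e e₁ e₂ hM hN ihM ihN =>
    intro x V hx
    obtain ⟨h1, h2⟩ := not_mem_vdom_comma hx
    simp only [subst, ihM x V h1, ihN x V h2]
  | uapp Γ₁ Γ₂ M N S T e e₁ e₂ hM hN ihM ihN =>
    intro x V hx
    obtain ⟨h1, h2⟩ := not_mem_vdom_par hx
    simp only [subst, ihM x V h1, ihN x V h2]
  | rapp Γ₁ Γ₂ M N S T e e₁ hM hN ihM ihN =>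
    intro x V hx
    obtain ⟨h1, h2⟩ := not_mem_vdom_comma hx
    simp only [subst, ihM x V h1, ihN x V h2]
  | lapp Γ₁ Γ₂ M N S T e e₂ hM hN ihM ihN =>
    intro x V hx
    obtain ⟨h1, h2⟩ := not_mem_vdom_comma hx
    simp only [subst, ihM x V h2, ihN x V h1]
  | upair Γ₁ Γ₂ M N S T e₁ e₂ hM hN ihM ihN =>
    intro x V hx
    obtain ⟨h1, h2⟩ := not_mem_vdom_par hx
    simp only [subst, ihM x V h1, ihN x V h2]
  | opair Γ₁ Γ₂ M N S T e₁ e₂ hord hM hN ihM ihN =>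
    intro x V hx
    obtain ⟨h1, h2⟩ := not_mem_vdom_comma hx
    simp only [subst, ihM x V h1, ihN x V h2]
  | ulet G Γ x' y' M N S₁ S₂ T e hxy hx' hy' hM hN ihM ihN =>
    intro x V hx
    have hxΓ : x ∉ vdom Γ := by
      rintro ⟨T', hT'⟩
      exact hx ⟨T', by rw [toList_fill]; simp [hT']⟩
    simp only [subst, ihM x V hxΓ]
    by_cases hc : x' = x ∨ y' = x
    · rw [if_pos hc]
    · rw [if_neg hc, ihN x V]
      rintro ⟨T', hT'⟩
      rw [toList_fill] at hT'
      simp only [List.mem_append, GCtx.toList, List.mem_singleton] at hT'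
      rcases hT' with (h' | (h' | h')) | h'
      · exact hx ⟨T', by rw [toList_fill]; simp [h']⟩
      · injection h' with h1 _
        exact hc (Or.inl h1.symm)
      · injection h' with h1 _
        exact hc (Or.inr h1.symm)
      · exact hx ⟨T', by rw [toList_fill]; simp [h']⟩
  | olet G Γ x' y' M N S₁ S₂ T e hxy hx' hy' hM hN ihM ihN =>
    intro x V hx
    have hxΓ : x ∉ vdom Γ := by
      rintro ⟨T', hT'⟩
      exact hx ⟨T', by rw [toList_fill]; simp [hT']⟩
    simp only [subst, ihM x V hxΓ]
    by_cases hc : x' = x ∨ y' = x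
    · rw [if_pos hc]
    · rw [if_neg hc, ihN x V]
      rintro ⟨T', hT'⟩
      rw [toList_fill] at hT'
      simp only [List.mem_append, GCtx.toList, List.mem_singleton] at hT'
      rcases hT' with (h' | (h' | h')) | h'
      · exact hx ⟨T', by rw [toList_fill]; simp [h']⟩
      · injection h' with h1 _
        exact hc (Or.inl h1.symm)
      · injection h' with h1 _
        exact hc (Or.inr h1.symm)
      · exact hx ⟨T', by rw [toList_fill]; simp [h']⟩
  | weaken Γ₁ Γ₂ M T e₁ e₂ hM hsub hee ih =>
    intro x V hx
    exact ih x V (fun hmem => hx (subC_vdom hsub hmem))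

/-- Values can be typed with the pure effect. -/
lemma value_false {P : OPM α} {Γ : Ctx α} {M : Expr α} {T : Ty α} {e : Bool}
    (h : Typing P Γ M T e) (hval : IsValue M) : Typing P Γ M T false := by
  induction h with
  | unit => exact Typing.unit
  | new m => exact Typing.new m
  | op m₀ m₁ m₂ hm => exact Typing.op m₀ m₁ m₂ hm
  | split m₀ m₁ m₂ hm => exact Typing.split m₀ m₁ m₂ hm
  | drop m hm => exact Typing.drop m hm
  | var x T => exact Typing.var x T
  | loc l m => exact Typing.loc l m
  | abs Γ x S T M e hx hunr hM ih => exact Typing.abs Γ x S T M e hx hunr hM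
  | uabs Γ x S T M e hx hM ih => exact Typing.uabs Γ x S T M e hx hM
  | rabs Γ x S T M e hx hM ih => exact Typing.rabs Γ x S T M e hx hM
  | labs Γ x S T M e hx hM ih => exact Typing.labs Γ x S T M e hx hM
  | app _ _ _ _ _ _ _ _ _ _ _ _ _ => cases hval
  | uapp _ _ _ _ _ _ _ _ _ _ _ _ _ => cases hval
  | rapp _ _ _ _ _ _ _ _ _ _ _ _ => cases hval
  | lapp _ _ _ _ _ _ _ _ _ _ _ _ => cases hval
  | upair Γ₁ Γ₂ M N S T e₁ e₂ hM hN ihM ihN =>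
    cases hval with
    | upair _ _ hv1 hv2 =>
      have := Typing.upair Γ₁ Γ₂ M N S T false false (ihM hv1) (ihN hv2)
      simpa using this
  | opair Γ₁ Γ₂ M N S T e₁ e₂ hord hM hN ihM ihN =>
    cases hval with
    | opair _ _ hv1 hv2 =>
      have := Typing.opair Γ₁ Γ₂ M N S T false false (fun _ => rfl)
        (ihM hv1) (ihN hv2)
      simpa using this
  | ulet _ _ _ _ _ _ _ _ _ _ _ _ _ _ _ _ => cases hval
  | olet _ _ _ _ _ _ _ _ _ _ _ _ _ _ _ _ => cases hval
  | weaken Γ₁ Γ₂ M T e₁ e₂ hM hsub hee ih =>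
    exact Typing.weaken Γ₁ Γ₂ M T false false (ih hval) hsub (le_refl false)

/-- Values of unrestricted type live in unrestricted contexts. -/
lemma value_unr_ctx {P : OPM α} {Γ : Ctx α} {M : Expr α} {T : Ty α} {e : Bool}
    (h : Typing P Γ M T e) (hval : IsValue M) (hT : T.unrB = true) : isUnrCtx Γ := by
  induction h with
  | unit => intro b hb; simp [GCtx.toList] at hb
  | new m => intro b hb; simp [GCtx.toList] at hb
  | op m₀ m₁ m₂ _ => intro b hb; simp [GCtx.toList] at hb
  | split m₀ m₁ m₂ _ => intro b hb; simp [GCtx.toList] at hb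
  | drop m _ => intro b hb; simp [GCtx.toList] at hb
  | var x T =>
    intro b hb
    simp only [GCtx.toList, List.mem_singleton] at hb
    subst hb
    exact hT
  | loc l m => simp [Ty.unrB] at hT
  | abs Γ x S T M e hx hunr hM ih => exact hunr
  | uabs Γ x S T M e hx hM ih => simp [Ty.unrB] at hT
  | rabs Γ x S T M e hx hM ih => simp [Ty.unrB] at hT
  | labs Γ x S T M e hx hM ih => simp [Ty.unrB] at hT
  | app _ _ _ _ _ _ _ _ _ _ _ _ _ => cases hval
  | uapp _ _ _ _ _ _ _ _ _ _ _ _ _ => cases hval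
  | rapp _ _ _ _ _ _ _ _ _ _ _ _ => cases hval
  | lapp _ _ _ _ _ _ _ _ _ _ _ _ => cases hval
  | upair Γ₁ Γ₂ M N S T e₁ e₂ hM hN ihM ihN =>
    cases hval with
    | upair _ _ hv1 hv2 =>
      simp only [Ty.unrB, Bool.and_eq_true] at hT
      intro b hb
      simp only [GCtx.toList, List.mem_append] at hb
      rcases hb with hb | hb
      · exact ihM hv1 hT.1 b hb
      · exact ihN hv2 hT.2 b hb
  | opair Γ₁ Γ₂ M N S T e₁ e₂ hord hM hN ihM ihN =>
    cases hval with
    | opair _ _ hv1 hv2 =>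
      simp only [Ty.unrB, Bool.and_eq_true] at hT
      intro b hb
      simp only [GCtx.toList, List.mem_append] at hb
      rcases hb with hb | hb
      · exact ihM hv1 hT.1 b hb
      · exact ihN hv2 hT.2 b hb
  | ulet _ _ _ _ _ _ _ _ _ _ _ _ _ _ _ _ => cases hval
  | olet _ _ _ _ _ _ _ _ _ _ _ _ _ _ _ _ => cases hval
  | weaken Γ₁ Γ₂ M T e₁ e₂ hM hsub hee ih =>
    exact subC_isUnrCtx hsub (ih hval hT)

end Aux11
section Aux12

variable {α : Type}

lemma subst_unr {P : OPM α} {Γ : Ctx α} {M : Expr α} {T : Ty α} {e : Bool}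
    (h : Typing P Γ M T e) :
    ∀ (x : ℕ) (S : Ty α) (V : Expr α), S.unrB = true →
      Typing P GCtx.empty V S false → IsValue V →
      (∀ T', Binding.var x T' ∈ Γ.toList → T' = S) →
      Typing P (eraseX x Γ) (subst M V x) T e := by
  induction h with
  | unit => intro x S V hS hV hval hcond; exact Typing.unit
  | new m => intro x S V hS hV hval hcond; exact Typing.new m
  | op m₀ m₁ m₂ hm => intro x S V hS hV hval hcond; exact Typing.op m₀ m₁ m₂ hm
  | split m₀ m₁ m₂ hm => intro x S V hS hV hval hcond; exact Typing.split m₀ m₁ m₂ hm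
  | drop m hm => intro x S V hS hV hval hcond; exact Typing.drop m hm
  | var x' T =>
    intro x S V hS hV hval hcond
    by_cases hc : x' = x
    · subst hc
      have hTS := hcond T (by simp [GCtx.toList])
      subst hTS
      simp only [subst, if_pos rfl, eraseX, if_pos rfl]
      exact hV
    · simp only [subst, if_neg hc, eraseX, if_neg hc]
      exact Typing.var x' T
  | loc l m =>
    intro x S V hS hV hval hcond
    exact Typing.loc l m
  | abs Γ x' S' T M e hx' hunr hM ih =>
    intro x S V hS hV hval hcond
    by_cases hin : x ∈ vdom Γ
    · have hne : x' ≠ x := fun hh => hx' (hh ▸ hin)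
      simp only [subst, if_neg hne]
      have hprem := ih x S V hS hV hval (by
        intro T' hT'
        simp only [GCtx.toList, List.mem_append, List.mem_singleton] at hT'
        rcases hT' with h' | h'
        · exact hcond T' h'
        · exfalso; injection h' with h1 _; exact hne h1.symm)
      simp only [eraseX, if_neg hne] at hprem
      refine Typing.abs _ x' S' T _ e ?_ ?_ hprem
      · rintro ⟨T', hT'⟩
        exact hx' ⟨T', (mem_toList_eraseX.mp hT').1⟩
      · intro b hb
        exact hunr b (mem_toList_eraseX.mp hb).1
    · rw [eraseX_id (fun T' hT' => hin ⟨T', hT'⟩),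
        subst_id (Typing.abs Γ x' S' T M e hx' hunr hM) x V hin]
      exact Typing.abs Γ x' S' T M e hx' hunr hM
  | uabs Γ x' S' T M e hx' hM ih =>
    intro x S V hS hV hval hcond
    by_cases hin : x ∈ vdom Γ
    · have hne : x' ≠ x := fun hh => hx' (hh ▸ hin)
      simp only [subst, if_neg hne]
      have hprem := ih x S V hS hV hval (by
        intro T' hT'
        simp only [GCtx.toList, List.mem_append, List.mem_singleton] at hT'
        rcases hT' with h' | h'
        · exact hcond T' h'
        · exfalso; injection h' with h1 _; exact hne h1.symm)
      simp only [eraseX, if_neg hne] at hprem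
      refine Typing.uabs _ x' S' T _ e ?_ hprem
      rintro ⟨T', hT'⟩
      exact hx' ⟨T', (mem_toList_eraseX.mp hT').1⟩
    · rw [eraseX_id (fun T' hT' => hin ⟨T', hT'⟩),
        subst_id (Typing.uabs Γ x' S' T M e hx' hM) x V hin]
      exact Typing.uabs Γ x' S' T M e hx' hM
  | rabs Γ x' S' T M e hx' hM ih =>
    intro x S V hS hV hval hcond
    by_cases hin : x ∈ vdom Γ
    · have hne : x' ≠ x := fun hh => hx' (hh ▸ hin)
      simp only [subst, if_neg hne]
      have hprem := ih x S V hS hV hval (by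
        intro T' hT'
        simp only [GCtx.toList, List.mem_append, List.mem_singleton] at hT'
        rcases hT' with h' | h'
        · exact hcond T' h'
        · exfalso; injection h' with h1 _; exact hne h1.symm)
      simp only [eraseX, if_neg hne] at hprem
      refine Typing.rabs _ x' S' T _ e ?_ hprem
      rintro ⟨T', hT'⟩
      exact hx' ⟨T', (mem_toList_eraseX.mp hT').1⟩
    · rw [eraseX_id (fun T' hT' => hin ⟨T', hT'⟩),
        subst_id (Typing.rabs Γ x' S' T M e hx' hM) x V hin]
      exact Typing.rabs Γ x' S' T M e hx' hM
  | labs Γ x' S' T M e hx' hM ih =>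
    intro x S V hS hV hval hcond
    by_cases hin : x ∈ vdom Γ
    · have hne : x' ≠ x := fun hh => hx' (hh ▸ hin)
      simp only [subst, if_neg hne]
      have hprem := ih x S V hS hV hval (by
        intro T' hT'
        simp only [GCtx.toList, List.mem_append, List.mem_singleton] at hT'
        rcases hT' with h' | h'
        · exfalso; injection h' with h1 _; exact hne h1.symm
        · exact hcond T' h')
      simp only [eraseX, if_neg hne] at hprem
      refine Typing.labs _ x' S' T _ e ?_ hprem
      rintro ⟨T', hT'⟩
      exact hx' ⟨T', (mem_toList_eraseX.mp hT').1⟩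
    · rw [eraseX_id (fun T' hT' => hin ⟨T', hT'⟩),
        subst_id (Typing.labs Γ x' S' T M e hx' hM) x V hin]
      exact Typing.labs Γ x' S' T M e hx' hM
  | app Γ₁ Γ₂ M N S' T e e₁ e₂ hM hN ihM ihN =>
    intro x S V hS hV hval hcond
    have h1 : ∀ T', Binding.var x T' ∈ Γ₁.toList → T' = S :=
      fun T' hT' => hcond T' (by simp [GCtx.toList, hT'])
    have h2 : ∀ T', Binding.var x T' ∈ Γ₂.toList → T' = S :=
      fun T' hT' => hcond T' (by simp [GCtx.toList, hT'])
    exact Typing.app _ _ _ _ _ _ _ _ _ (ihM x S V hS hV hval h1) (ihN x S V hS hV hval h2)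
  | uapp Γ₁ Γ₂ M N S' T e e₁ e₂ hM hN ihM ihN =>
    intro x S V hS hV hval hcond
    have h1 : ∀ T', Binding.var x T' ∈ Γ₁.toList → T' = S :=
      fun T' hT' => hcond T' (by simp [GCtx.toList, hT'])
    have h2 : ∀ T', Binding.var x T' ∈ Γ₂.toList → T' = S :=
      fun T' hT' => hcond T' (by simp [GCtx.toList, hT'])
    exact Typing.uapp _ _ _ _ _ _ _ _ _ (ihM x S V hS hV hval h1) (ihN x S V hS hV hval h2)
  | rapp Γ₁ Γ₂ M N S' T e e₁ hM hN ihM ihN =>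
    intro x S V hS hV hval hcond
    have h1 : ∀ T', Binding.var x T' ∈ Γ₁.toList → T' = S :=
      fun T' hT' => hcond T' (by simp [GCtx.toList, hT'])
    have h2 : ∀ T', Binding.var x T' ∈ Γ₂.toList → T' = S :=
      fun T' hT' => hcond T' (by simp [GCtx.toList, hT'])
    exact Typing.rapp _ _ _ _ _ _ _ _ (ihM x S V hS hV hval h1) (ihN x S V hS hV hval h2)
  | lapp Γ₁ Γ₂ M N S' T e e₂ hM hN ihM ihN =>
    intro x S V hS hV hval hcond
    have h1 : ∀ T', Binding.var x T' ∈ Γ₁.toList → T' = S :=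
      fun T' hT' => hcond T' (by simp [GCtx.toList, hT'])
    have h2 : ∀ T', Binding.var x T' ∈ Γ₂.toList → T' = S :=
      fun T' hT' => hcond T' (by simp [GCtx.toList, hT'])
    exact Typing.lapp _ _ _ _ _ _ _ _ (ihM x S V hS hV hval h2) (ihN x S V hS hV hval h1)
  | upair Γ₁ Γ₂ M N S' T e₁ e₂ hM hN ihM ihN =>
    intro x S V hS hV hval hcond
    have h1 : ∀ T', Binding.var x T' ∈ Γ₁.toList → T' = S :=
      fun T' hT' => hcond T' (by simp [GCtx.toList, hT'])
    have h2 : ∀ T', Binding.var x T' ∈ Γ₂.toList → T' = S :=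
      fun T' hT' => hcond T' (by simp [GCtx.toList, hT'])
    exact Typing.upair _ _ _ _ _ _ _ _ (ihM x S V hS hV hval h1) (ihN x S V hS hV hval h2)
  | opair Γ₁ Γ₂ M N S' T e₁ e₂ hord hM hN ihM ihN =>
    intro x S V hS hV hval hcond
    have h1 : ∀ T', Binding.var x T' ∈ Γ₁.toList → T' = S :=
      fun T' hT' => hcond T' (by simp [GCtx.toList, hT'])
    have h2 : ∀ T', Binding.var x T' ∈ Γ₂.toList → T' = S :=
      fun T' hT' => hcond T' (by simp [GCtx.toList, hT'])
    exact Typing.opair _ _ _ _ _ _ _ _ hord (ihM x S V hS hV hval h1) (ihN x S V hS hV hval h2)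
  | ulet G Γ x' y' M N S₁ S₂ T e hxy hx' hy' hM hN ihM ihN =>
    intro x S V hS hV hval hcond
    by_cases hin : x ∈ vdom (GPat.fill G Γ)
    · have hnex : x' ≠ x := fun hh => hx' (hh ▸ hin)
      have hney : y' ≠ x := fun hh => hy' (hh ▸ hin)
      simp only [subst, if_neg (not_or.mpr ⟨hnex, hney⟩)]
      rw [eraseX_fill x G Γ]
      have hM' := ihM x S V hS hV hval (by
        intro T' hT'
        exact hcond T' (by rw [toList_fill]; simp [hT']))
      have hN' := ihN x S V hS hV hval (by
        intro T' hT'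
        rw [toList_fill] at hT'
        simp only [List.mem_append, GCtx.toList, List.mem_singleton] at hT'
        rcases hT' with (h' | (h' | h')) | h'
        · exact hcond T' (by rw [toList_fill]; simp [h'])
        · exfalso; injection h' with h1 _; exact hnex h1.symm
        · exfalso; injection h' with h1 _; exact hney h1.symm
        · exact hcond T' (by rw [toList_fill]; simp [h']))
      rw [eraseX_fill x G] at hN'
      simp only [eraseX, if_neg hnex, if_neg hney] at hN'
      refine Typing.ulet (eraseXPat x G) (eraseX x Γ) x' y' _ _ S₁ S₂ T e hxy ?_ ?_ hM' hN'
      · rintro ⟨T', hT'⟩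
        rw [← eraseX_fill] at hT'
        exact hx' ⟨T', (mem_toList_eraseX.mp hT').1⟩
      · rintro ⟨T', hT'⟩
        rw [← eraseX_fill] at hT'
        exact hy' ⟨T', (mem_toList_eraseX.mp hT').1⟩
    · rw [eraseX_id (fun T' hT' => hin ⟨T', hT'⟩),
        subst_id (Typing.ulet G Γ x' y' M N S₁ S₂ T e hxy hx' hy' hM hN) x V hin]
      exact Typing.ulet G Γ x' y' M N S₁ S₂ T e hxy hx' hy' hM hN
  | olet G Γ x' y' M N S₁ S₂ T e hxy hx' hy' hM hN ihM ihN =>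
    intro x S V hS hV hval hcond
    by_cases hin : x ∈ vdom (GPat.fill G Γ)
    · have hnex : x' ≠ x := fun hh => hx' (hh ▸ hin)
      have hney : y' ≠ x := fun hh => hy' (hh ▸ hin)
      simp only [subst, if_neg (not_or.mpr ⟨hnex, hney⟩)]
      rw [eraseX_fill x G Γ]
      have hM' := ihM x S V hS hV hval (by
        intro T' hT'
        exact hcond T' (by rw [toList_fill]; simp [hT']))
      have hN' := ihN x S V hS hV hval (by
        intro T' hT'
        rw [toList_fill] at hT'
        simp only [List.mem_append, GCtx.toList, List.mem_singleton] at hT'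
        rcases hT' with (h' | (h' | h')) | h'
        · exact hcond T' (by rw [toList_fill]; simp [h'])
        · exfalso; injection h' with h1 _; exact hnex h1.symm
        · exfalso; injection h' with h1 _; exact hney h1.symm
        · exact hcond T' (by rw [toList_fill]; simp [h']))
      rw [eraseX_fill x G] at hN'
      simp only [eraseX, if_neg hnex, if_neg hney] at hN'
      refine Typing.olet (eraseXPat x G) (eraseX x Γ) x' y' _ _ S₁ S₂ T e hxy ?_ ?_ hM' hN'
      · rintro ⟨T', hT'⟩
        rw [← eraseX_fill] at hT'
        exact hx' ⟨T', (mem_toList_eraseX.mp hT').1⟩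
      · rintro ⟨T', hT'⟩
        rw [← eraseX_fill] at hT'
        exact hy' ⟨T', (mem_toList_eraseX.mp hT').1⟩
    · rw [eraseX_id (fun T' hT' => hin ⟨T', hT'⟩),
        subst_id (Typing.olet G Γ x' y' M N S₁ S₂ T e hxy hx' hy' hM hN) x V hin]
      exact Typing.olet G Γ x' y' M N S₁ S₂ T e hxy hx' hy' hM hN
  | weaken Γ₁ Γ₂ M T e₁ e₂ hM hsub hee ih =>
    intro x S V hS hV hval hcond
    obtain ⟨⟨hn, g, hbd, hinj, hsurj, hlab, hedg⟩, hunr⟩ := char_iff.mp hsub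
    have hcond₁ : ∀ T', Binding.var x T' ∈ Γ₁.toList → T' = S := by
      intro T' hmem
      by_cases hu : (Binding.var x T').unrB = true
      · have : Binding.var x T' ∈ unrSetC Γ₁ := mem_unrSet_iff.mpr ⟨hmem, hu⟩
        exact hcond T' (mem_unrSet_iff.mp (hunr this)).1
      · obtain ⟨i, hi, hlabi⟩ := label_of_mem_toList_ord hmem (by simpa using hu)
        have h1 : (interpC Γ₂).label (g i) = Binding.var x T' := by
          rw [hlab i hi, hlabi]
        have h2 := mem_toList_of_label Γ₂ (g i) (hbd i hi)
        rw [h1] at h2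
        exact hcond T' h2
    have hsub' : SubC (eraseX x Γ₂) (eraseX x Γ₁) := by
      refine char_iff.mpr ⟨?_, ?_⟩
      · rw [interp_eraseX (fun T' hT' => by rw [hcond T' hT']; exact hS),
          interp_eraseX (fun T' hT' => by rw [hcond₁ T' hT']; exact hS)]
        exact (char_iff.mp hsub).1
      · intro b hb
        obtain ⟨hb1, hb2⟩ := mem_unrSet_iff.mp hb
        obtain ⟨hb3, hb4⟩ := mem_toList_eraseX.mp hb1
        have : b ∈ unrSetC Γ₂ := hunr (mem_unrSet_iff.mpr ⟨hb3, hb2⟩)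
        exact mem_unrSet_iff.mpr ⟨mem_toList_eraseX.mpr
          ⟨(mem_unrSet_iff.mp this).1, hb4⟩, hb2⟩
    exact Typing.weaken _ _ _ _ e₁ e₂ (ih x S V hS hV hval hcond₁) hsub' hee

end Aux12
section Aux13

variable {α : Type} {B : Type}

lemma fill_empty_inv {G : GPat B} {b : B}
    (heq : GCtx.empty = G.fill (GCtx.bind b)) : False := by
  cases G <;> simp only [GPat.fill] at heq <;> cases heq

lemma fill_bind_inv {G : GPat B} {b b' : B}
    (heq : GCtx.bind b' = G.fill (GCtx.bind b)) : G = GPat.hole ∧ b' = b := by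
  cases G <;> simp only [GPat.fill] at heq
  · injection heq with h1
    exact ⟨rfl, h1⟩
  all_goals cases heq

lemma fill_comma_inv {G : GPat B} {b : B} {Γ₁ Γ₂ : GCtx B}
    (heq : GCtx.comma Γ₁ Γ₂ = G.fill (GCtx.bind b)) :
    (∃ G', G = GPat.commaL G' Γ₂ ∧ Γ₁ = G'.fill (GCtx.bind b)) ∨
    (∃ G', G = GPat.commaR Γ₁ G' ∧ Γ₂ = G'.fill (GCtx.bind b)) := by
  cases G <;> simp only [GPat.fill] at heq
  · cases heq
  · injection heq with h1 h2
    subst h2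
    exact Or.inl ⟨_, rfl, h1⟩
  · injection heq with h1 h2
    subst h1
    exact Or.inr ⟨_, rfl, h2⟩
  · cases heq
  · cases heq

lemma fill_par_inv {G : GPat B} {b : B} {Γ₁ Γ₂ : GCtx B}
    (heq : GCtx.par Γ₁ Γ₂ = G.fill (GCtx.bind b)) :
    (∃ G', G = GPat.parL G' Γ₂ ∧ Γ₁ = G'.fill (GCtx.bind b)) ∨
    (∃ G', G = GPat.parR Γ₁ G' ∧ Γ₂ = G'.fill (GCtx.bind b)) := by
  cases G <;> simp only [GPat.fill] at heq
  · cases heq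
  · cases heq
  · cases heq
  · injection heq with h1 h2
    subst h2
    exact Or.inl ⟨_, rfl, h1⟩
  · injection heq with h1 h2
    subst h1
    exact Or.inr ⟨_, rfl, h2⟩

lemma vdom_fill_runtime (G : CtxPat α) {C : Ctx α} (hC : isRuntime C) (Δ : Ctx α) :
    vdom (G.fill C) ⊆ vdom (G.fill Δ) := by
  rintro z ⟨T', hm⟩
  rw [toList_fill] at hm
  simp only [List.mem_append] at hm
  rcases hm with (hm | hm) | hm
  · exact ⟨T', by rw [toList_fill]; simp [hm]⟩
  · exact absurd hm (runtime_no_var hC z T')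
  · exact ⟨T', by rw [toList_fill]; simp [hm]⟩

lemma isRuntime_empty : isRuntime (GCtx.empty : Ctx α) := by
  intro b hb
  simp [GCtx.toList] at hb

end Aux13
section Aux14

variable {α : Type}

set_option maxHeartbeats 2000000 in
lemma subst_ord {P : OPM α} {Γc : Ctx α} {M : Expr α} {T : Ty α} {e : Bool}
    (h : Typing P Γc M T e) :
    ∀ (G : CtxPat α) (x : ℕ) (S : Ty α) (V : Expr α) (C : Ctx α),
      S.unrB = false →
      Γc = G.fill (GCtx.bind (Binding.var x S)) →
      x ∉ vdom (G.fill GCtx.empty) →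
      isRuntime C → IsValue V → Typing P C V S false →
      Typing P (G.fill C) (subst M V x) T e := by
  induction h with
  | unit =>
    intro G x S V C hS heq hx hC hval hV
    exact (fill_empty_inv heq).elim
  | new m =>
    intro G x S V C hS heq hx hC hval hV
    exact (fill_empty_inv heq).elim
  | op m₀ m₁ m₂ hm =>
    intro G x S V C hS heq hx hC hval hV
    exact (fill_empty_inv heq).elim
  | split m₀ m₁ m₂ hm =>
    intro G x S V C hS heq hx hC hval hV
    exact (fill_empty_inv heq).elim
  | drop m hm =>
    intro G x S V C hS heq hx hC hval hV
    exact (fill_empty_inv heq).elim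
  | var x' T' =>
    intro G x S V C hS heq hx hC hval hV
    obtain ⟨hG, h2⟩ := fill_bind_inv heq
    injection h2 with h3 h4
    subst hG; subst h3; subst h4
    simp only [GPat.fill, subst, if_pos rfl]
    exact hV
  | loc l m =>
    intro G x S V C hS heq hx hC hval hV
    obtain ⟨_, h2⟩ := fill_bind_inv heq
    cases h2
  | abs Γ x' S' T' M e hx' hunr hM ih =>
    intro G x S V C hS heq hx hC hval hV
    exfalso
    have hmem : Binding.var x S ∈ Γ.toList := by
      rw [heq, toList_fill]; simp [GCtx.toList]
    have h1 := hunr _ hmem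
    simp only [Binding.unrB] at h1
    rw [hS] at h1
    exact Bool.false_ne_true h1
  | uabs Γ x' S' T' M e hx' hM ih =>
    intro G x S V C hS heq hx hC hval hV
    subst heq
    have hnex : x' ≠ x := fun hh => hx' (hh ▸ mem_vdom_fill G x S)
    have hx2 : x ∉ vdom ((GPat.parL G (GCtx.bind (Binding.var x' S'))).fill GCtx.empty) := by
      rintro ⟨T'', hT''⟩
      rw [toList_fill] at hT''
      simp only [GPat.pre, GPat.suf, GCtx.toList, List.mem_append,
        List.mem_singleton, List.not_mem_nil, or_false] at hT''
      rcases hT'' with h' | h' | h'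
      · exact hx ⟨T'', by rw [toList_fill]; simp [h']⟩
      · exact hx ⟨T'', by rw [toList_fill]; simp [h']⟩
      · injection h' with h1 _; exact hnex h1.symm
    have hprem := ih (GPat.parL G (GCtx.bind (Binding.var x' S'))) x S V C hS rfl hx2 hC hval hV
    simp only [subst, if_neg hnex]
    refine Typing.uabs _ x' S' T' _ e ?_ hprem
    intro hmem
    exact hx' (vdom_fill_runtime G hC (GCtx.bind (Binding.var x S)) hmem)
  | rabs Γ x' S' T' M e hx' hM ih =>
    intro G x S V C hS heq hx hC hval hV
    subst heq
    have hnex : x' ≠ x := fun hh => hx' (hh ▸ mem_vdom_fill G x S)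
    have hx2 : x ∉ vdom ((GPat.commaL G (GCtx.bind (Binding.var x' S'))).fill GCtx.empty) := by
      rintro ⟨T'', hT''⟩
      rw [toList_fill] at hT''
      simp only [GPat.pre, GPat.suf, GCtx.toList, List.mem_append,
        List.mem_singleton, List.not_mem_nil, or_false] at hT''
      rcases hT'' with h' | h' | h'
      · exact hx ⟨T'', by rw [toList_fill]; simp [h']⟩
      · exact hx ⟨T'', by rw [toList_fill]; simp [h']⟩
      · injection h' with h1 _; exact hnex h1.symm
    have hprem := ih (GPat.commaL G (GCtx.bind (Binding.var x' S'))) x S V C hS rfl hx2 hC hval hV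
    simp only [subst, if_neg hnex]
    refine Typing.rabs _ x' S' T' _ e ?_ hprem
    intro hmem
    exact hx' (vdom_fill_runtime G hC (GCtx.bind (Binding.var x S)) hmem)
  | labs Γ x' S' T' M e hx' hM ih =>
    intro G x S V C hS heq hx hC hval hV
    subst heq
    have hnex : x' ≠ x := fun hh => hx' (hh ▸ mem_vdom_fill G x S)
    have hx2 : x ∉ vdom ((GPat.commaR (GCtx.bind (Binding.var x' S')) G).fill GCtx.empty) := by
      rintro ⟨T'', hT''⟩
      rw [toList_fill] at hT''
      simp only [GPat.pre, GPat.suf, GCtx.toList, List.mem_append,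
        List.mem_singleton, List.not_mem_nil, or_false] at hT''
      rcases hT'' with (h' | h') | h'
      · injection h' with h1 _; exact hnex h1.symm
      · exact hx ⟨T'', by rw [toList_fill]; simp [h']⟩
      · exact hx ⟨T'', by rw [toList_fill]; simp [h']⟩
    have hprem := ih (GPat.commaR (GCtx.bind (Binding.var x' S')) G) x S V C hS rfl hx2 hC hval hV
    simp only [subst, if_neg hnex]
    refine Typing.labs _ x' S' T' _ e ?_ hprem
    intro hmem
    exact hx' (vdom_fill_runtime G hC (GCtx.bind (Binding.var x S)) hmem)
  | app Γ₁ Γ₂ M N S' T' e e₁ e₂ hM hN ihM ihN =>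
    intro G x S V C hS heq hx hC hval hV
    rcases fill_comma_inv heq with ⟨G', rfl, hΓ⟩ | ⟨G', rfl, hΓ⟩
    · have hx1 : x ∉ vdom (G'.fill GCtx.empty) := by
        rintro ⟨T'', hT''⟩
        refine hx ⟨T'', ?_⟩
        rw [toList_fill] at hT'' ⊢
        simp only [GPat.pre, GPat.suf, List.mem_append] at hT'' ⊢
        tauto
      have hx2 : x ∉ vdom Γ₂ := by
        rintro ⟨T'', hT''⟩
        refine hx ⟨T'', ?_⟩
        rw [toList_fill]
        simp only [GPat.pre, GPat.suf, GCtx.toList, List.mem_append]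
        tauto
      simp only [subst]
      rw [subst_id hN x V hx2]
      exact Typing.app _ _ _ _ _ _ _ _ _ (ihM G' x S V C hS hΓ hx1 hC hval hV) hN
    · have hx1 : x ∉ vdom (G'.fill GCtx.empty) := by
        rintro ⟨T'', hT''⟩
        refine hx ⟨T'', ?_⟩
        rw [toList_fill] at hT'' ⊢
        simp only [GPat.pre, GPat.suf, GCtx.toList, List.mem_append] at hT'' ⊢
        tauto
      have hx2 : x ∉ vdom Γ₁ := by
        rintro ⟨T'', hT''⟩
        refine hx ⟨T'', ?_⟩
        rw [toList_fill]
        simp only [GPat.pre, GPat.suf, GCtx.toList, List.mem_append]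
        tauto
      simp only [subst]
      rw [subst_id hM x V hx2]
      exact Typing.app _ _ _ _ _ _ _ _ _ hM (ihN G' x S V C hS hΓ hx1 hC hval hV)
  | uapp Γ₁ Γ₂ M N S' T' e e₁ e₂ hM hN ihM ihN =>
    intro G x S V C hS heq hx hC hval hV
    rcases fill_par_inv heq with ⟨G', rfl, hΓ⟩ | ⟨G', rfl, hΓ⟩
    · have hx1 : x ∉ vdom (G'.fill GCtx.empty) := by
        rintro ⟨T'', hT''⟩
        refine hx ⟨T'', ?_⟩
        rw [toList_fill] at hT'' ⊢
        simp only [GPat.pre, GPat.suf, List.mem_append] at hT'' ⊢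
        tauto
      have hx2 : x ∉ vdom Γ₂ := by
        rintro ⟨T'', hT''⟩
        refine hx ⟨T'', ?_⟩
        rw [toList_fill]
        simp only [GPat.pre, GPat.suf, GCtx.toList, List.mem_append]
        tauto
      simp only [subst]
      rw [subst_id hN x V hx2]
      exact Typing.uapp _ _ _ _ _ _ _ _ _ (ihM G' x S V C hS hΓ hx1 hC hval hV) hN
    · have hx1 : x ∉ vdom (G'.fill GCtx.empty) := by
        rintro ⟨T'', hT''⟩
        refine hx ⟨T'', ?_⟩
        rw [toList_fill] at hT'' ⊢
        simp only [GPat.pre, GPat.suf, GCtx.toList, List.mem_append] at hT'' ⊢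
        tauto
      have hx2 : x ∉ vdom Γ₁ := by
        rintro ⟨T'', hT''⟩
        refine hx ⟨T'', ?_⟩
        rw [toList_fill]
        simp only [GPat.pre, GPat.suf, GCtx.toList, List.mem_append]
        tauto
      simp only [subst]
      rw [subst_id hM x V hx2]
      exact Typing.uapp _ _ _ _ _ _ _ _ _ hM (ihN G' x S V C hS hΓ hx1 hC hval hV)
  | rapp Γ₁ Γ₂ M N S' T' e e₁ hM hN ihM ihN =>
    intro G x S V C hS heq hx hC hval hV
    rcases fill_comma_inv heq with ⟨G', rfl, hΓ⟩ | ⟨G', rfl, hΓ⟩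
    · have hx1 : x ∉ vdom (G'.fill GCtx.empty) := by
        rintro ⟨T'', hT''⟩
        refine hx ⟨T'', ?_⟩
        rw [toList_fill] at hT'' ⊢
        simp only [GPat.pre, GPat.suf, List.mem_append] at hT'' ⊢
        tauto
      have hx2 : x ∉ vdom Γ₂ := by
        rintro ⟨T'', hT''⟩
        refine hx ⟨T'', ?_⟩
        rw [toList_fill]
        simp only [GPat.pre, GPat.suf, GCtx.toList, List.mem_append]
        tauto
      simp only [subst]
      rw [subst_id hN x V hx2]
      exact Typing.rapp _ _ _ _ _ _ _ _ (ihM G' x S V C hS hΓ hx1 hC hval hV) hN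
    · have hx1 : x ∉ vdom (G'.fill GCtx.empty) := by
        rintro ⟨T'', hT''⟩
        refine hx ⟨T'', ?_⟩
        rw [toList_fill] at hT'' ⊢
        simp only [GPat.pre, GPat.suf, GCtx.toList, List.mem_append] at hT'' ⊢
        tauto
      have hx2 : x ∉ vdom Γ₁ := by
        rintro ⟨T'', hT''⟩
        refine hx ⟨T'', ?_⟩
        rw [toList_fill]
        simp only [GPat.pre, GPat.suf, GCtx.toList, List.mem_append]
        tauto
      simp only [subst]
      rw [subst_id hM x V hx2]
      exact Typing.rapp _ _ _ _ _ _ _ _ hM (ihN G' x S V C hS hΓ hx1 hC hval hV)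
  | lapp Γ₁ Γ₂ M N S' T' e e₂ hM hN ihM ihN =>
    intro G x S V C hS heq hx hC hval hV
    rcases fill_comma_inv heq with ⟨G', rfl, hΓ⟩ | ⟨G', rfl, hΓ⟩
    · have hx1 : x ∉ vdom (G'.fill GCtx.empty) := by
        rintro ⟨T'', hT''⟩
        refine hx ⟨T'', ?_⟩
        rw [toList_fill] at hT'' ⊢
        simp only [GPat.pre, GPat.suf, List.mem_append] at hT'' ⊢
        tauto
      have hx2 : x ∉ vdom Γ₂ := by
        rintro ⟨T'', hT''⟩
        refine hx ⟨T'', ?_⟩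
        rw [toList_fill]
        simp only [GPat.pre, GPat.suf, GCtx.toList, List.mem_append]
        tauto
      simp only [subst]
      rw [subst_id hM x V hx2]
      exact Typing.lapp _ _ _ _ _ _ _ _ hM (ihN G' x S V C hS hΓ hx1 hC hval hV)
    · have hx1 : x ∉ vdom (G'.fill GCtx.empty) := by
        rintro ⟨T'', hT''⟩
        refine hx ⟨T'', ?_⟩
        rw [toList_fill] at hT'' ⊢
        simp only [GPat.pre, GPat.suf, GCtx.toList, List.mem_append] at hT'' ⊢
        tauto
      have hx2 : x ∉ vdom Γ₁ := by
        rintro ⟨T'', hT''⟩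
        refine hx ⟨T'', ?_⟩
        rw [toList_fill]
        simp only [GPat.pre, GPat.suf, GCtx.toList, List.mem_append]
        tauto
      simp only [subst]
      rw [subst_id hN x V hx2]
      exact Typing.lapp _ _ _ _ _ _ _ _ (ihM G' x S V C hS hΓ hx1 hC hval hV) hN
  | upair Γ₁ Γ₂ M N S' T' e₁ e₂ hM hN ihM ihN =>
    intro G x S V C hS heq hx hC hval hV
    rcases fill_par_inv heq with ⟨G', rfl, hΓ⟩ | ⟨G', rfl, hΓ⟩
    · have hx1 : x ∉ vdom (G'.fill GCtx.empty) := by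
        rintro ⟨T'', hT''⟩
        refine hx ⟨T'', ?_⟩
        rw [toList_fill] at hT'' ⊢
        simp only [GPat.pre, GPat.suf, List.mem_append] at hT'' ⊢
        tauto
      have hx2 : x ∉ vdom Γ₂ := by
        rintro ⟨T'', hT''⟩
        refine hx ⟨T'', ?_⟩
        rw [toList_fill]
        simp only [GPat.pre, GPat.suf, GCtx.toList, List.mem_append]
        tauto
      simp only [subst]
      rw [subst_id hN x V hx2]
      exact Typing.upair _ _ _ _ _ _ _ _ (ihM G' x S V C hS hΓ hx1 hC hval hV) hN
    · have hx1 : x ∉ vdom (G'.fill GCtx.empty) := by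
        rintro ⟨T'', hT''⟩
        refine hx ⟨T'', ?_⟩
        rw [toList_fill] at hT'' ⊢
        simp only [GPat.pre, GPat.suf, GCtx.toList, List.mem_append] at hT'' ⊢
        tauto
      have hx2 : x ∉ vdom Γ₁ := by
        rintro ⟨T'', hT''⟩
        refine hx ⟨T'', ?_⟩
        rw [toList_fill]
        simp only [GPat.pre, GPat.suf, GCtx.toList, List.mem_append]
        tauto
      simp only [subst]
      rw [subst_id hM x V hx2]
      exact Typing.upair _ _ _ _ _ _ _ _ hM (ihN G' x S V C hS hΓ hx1 hC hval hV)
  | opair Γ₁ Γ₂ M N S' T' e₁ e₂ hord hM hN ihM ihN =>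
    intro G x S V C hS heq hx hC hval hV
    rcases fill_comma_inv heq with ⟨G', rfl, hΓ⟩ | ⟨G', rfl, hΓ⟩
    · have hx1 : x ∉ vdom (G'.fill GCtx.empty) := by
        rintro ⟨T'', hT''⟩
        refine hx ⟨T'', ?_⟩
        rw [toList_fill] at hT'' ⊢
        simp only [GPat.pre, GPat.suf, List.mem_append] at hT'' ⊢
        tauto
      have hx2 : x ∉ vdom Γ₂ := by
        rintro ⟨T'', hT''⟩
        refine hx ⟨T'', ?_⟩
        rw [toList_fill]
        simp only [GPat.pre, GPat.suf, GCtx.toList, List.mem_append]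
        tauto
      simp only [subst]
      rw [subst_id hN x V hx2]
      exact Typing.opair _ _ _ _ _ _ _ _ hord (ihM G' x S V C hS hΓ hx1 hC hval hV) hN
    · have hx1 : x ∉ vdom (G'.fill GCtx.empty) := by
        rintro ⟨T'', hT''⟩
        refine hx ⟨T'', ?_⟩
        rw [toList_fill] at hT'' ⊢
        simp only [GPat.pre, GPat.suf, GCtx.toList, List.mem_append] at hT'' ⊢
        tauto
      have hx2 : x ∉ vdom Γ₁ := by
        rintro ⟨T'', hT''⟩
        refine hx ⟨T'', ?_⟩
        rw [toList_fill]
        simp only [GPat.pre, GPat.suf, GCtx.toList, List.mem_append]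
        tauto
      simp only [subst]
      rw [subst_id hM x V hx2]
      exact Typing.opair _ _ _ _ _ _ _ _ hord hM (ihN G' x S V C hS hΓ hx1 hC hval hV)
  | ulet G₀ Γ x' y' M N S₁ S₂ T e hxy hx' hy' hM hN ihM ihN =>
    intro G x S V C hS heq hx hC hval hV
    have hxin : x ∈ vdom (GPat.fill G₀ Γ) := by rw [heq]; exact mem_vdom_fill G x S
    have hnex : x' ≠ x := fun hh => hx' (hh ▸ hxin)
    have hney : y' ≠ x := fun hh => hy' (hh ▸ hxin)
    rcases fill_decompose G₀ G (Binding.var x S) Γ heq.symm with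
      ⟨G'', hΓ, hcomm⟩ | ⟨F, hF1, hF2, hF3, hF4, pre, mid, suf, hmem⟩
    · have hxG'' : x ∉ vdom (G''.fill GCtx.empty) := by
        rintro ⟨T'', hT''⟩
        refine hx ⟨T'', ?_⟩
        rw [hcomm GCtx.empty, toList_fill]
        simp [hT'']
      have hM' := ihM G'' x S V C hS hΓ hxG'' hC hval hV
      have hxparts : x ∉ vdom (GPat.fill G₀ (GCtx.par (GCtx.bind (Binding.var x' S₁))
          (GCtx.bind (Binding.var y' S₂)))) := by
        rintro ⟨T'', hT''⟩
        rw [toList_fill] at hT''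
        simp only [List.mem_append, GCtx.toList, List.mem_singleton] at hT''
        rcases hT'' with (h' | (h' | h')) | h'
        · exact hx ⟨T'', by rw [hcomm GCtx.empty, toList_fill]; simp [h']⟩
        · injection h' with h1 _; exact hnex h1.symm
        · injection h' with h1 _; exact hney h1.symm
        · exact hx ⟨T'', by rw [hcomm GCtx.empty, toList_fill]; simp [h']⟩
      have hNid : subst N V x = N := subst_id hN x V hxparts
      simp only [subst, if_neg (not_or.mpr ⟨hnex, hney⟩), hNid]
      rw [hcomm C]
      have hsubv : vdom (G₀.fill (G''.fill C)) ⊆ vdom (G₀.fill Γ) := by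
        rw [← hcomm C, hΓ, ← hcomm (GCtx.bind (Binding.var x S))]
        exact vdom_fill_runtime G hC _
      exact Typing.ulet G₀ (G''.fill C) x' y' _ N S₁ S₂ T e hxy
        (fun hmem' => hx' (hsubv hmem')) (fun hmem' => hy' (hsubv hmem')) hM' hN
    · have hxΓ : x ∉ vdom Γ := by
        rintro ⟨T'', hT''⟩
        refine hx ⟨T'', ?_⟩
        rw [hF1 GCtx.empty]
        exact (hmem GCtx.empty Γ _).mpr (Or.inr (Or.inr (Or.inr (Or.inl hT''))))
      have hMid : subst M V x = M := subst_id hM x V hxΓ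
      obtain ⟨Gp, hGp⟩ := hF4 (GCtx.par (GCtx.bind (Binding.var x' S₁))
        (GCtx.bind (Binding.var y' S₂)))
      obtain ⟨Gq, hGq⟩ := hF3 C
      have heqN : GPat.fill G₀ (GCtx.par (GCtx.bind (Binding.var x' S₁))
          (GCtx.bind (Binding.var y' S₂))) = Gp.fill (GCtx.bind (Binding.var x S)) := by
        rw [hF2, hGp]
      have hxGp : x ∉ vdom (Gp.fill GCtx.empty) := by
        rintro ⟨T'', hT''⟩
        rw [hGp GCtx.empty] at hT''
        have h5 := (hmem GCtx.empty _ _).mp hT''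
        rcases h5 with h' | h' | h' | h' | h'
        · exact hx ⟨T'', by rw [hF1 GCtx.empty]; exact (hmem _ _ _).mpr (Or.inl h')⟩
        · simp [GCtx.toList] at h'
        · refine hx ⟨T'', ?_⟩
          rw [hF1 GCtx.empty]
          exact (hmem _ _ _).mpr (Or.inr (Or.inr (Or.inl h')))
        · simp only [GCtx.toList, List.mem_append, List.mem_singleton] at h'
          rcases h' with h' | h'
          · injection h' with h1 _; exact hnex h1.symm
          · injection h' with h1 _; exact hney h1.symm
        · refine hx ⟨T'', ?_⟩
          rw [hF1 GCtx.empty]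
          exact (hmem _ _ _).mpr (Or.inr (Or.inr (Or.inr (Or.inr h'))))
      have hN' := ihN Gp x S V C hS heqN hxGp hC hval hV
      rw [hGp C, ← hGq] at hN'
      simp only [subst, if_neg (not_or.mpr ⟨hnex, hney⟩), hMid]
      have hgoalctx : GPat.fill G C = Gq.fill Γ := by rw [hF1 C, hGq Γ]
      rw [hgoalctx]
      have hsubv : vdom (Gq.fill Γ) ⊆ vdom (G₀.fill Γ) := by
        rw [← hgoalctx, heq]
        exact vdom_fill_runtime G hC _
      exact Typing.ulet Gq Γ x' y' M _ S₁ S₂ T e hxy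
        (fun hmem' => hx' (hsubv hmem')) (fun hmem' => hy' (hsubv hmem')) hM hN'
  | olet G₀ Γ x' y' M N S₁ S₂ T e hxy hx' hy' hM hN ihM ihN =>
    intro G x S V C hS heq hx hC hval hV
    have hxin : x ∈ vdom (GPat.fill G₀ Γ) := by rw [heq]; exact mem_vdom_fill G x S
    have hnex : x' ≠ x := fun hh => hx' (hh ▸ hxin)
    have hney : y' ≠ x := fun hh => hy' (hh ▸ hxin)
    rcases fill_decompose G₀ G (Binding.var x S) Γ heq.symm with
      ⟨G'', hΓ, hcomm⟩ | ⟨F, hF1, hF2, hF3, hF4, pre, mid, suf, hmem⟩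
    · have hxG'' : x ∉ vdom (G''.fill GCtx.empty) := by
        rintro ⟨T'', hT''⟩
        refine hx ⟨T'', ?_⟩
        rw [hcomm GCtx.empty, toList_fill]
        simp [hT'']
      have hM' := ihM G'' x S V C hS hΓ hxG'' hC hval hV
      have hxparts : x ∉ vdom (GPat.fill G₀ (GCtx.comma (GCtx.bind (Binding.var x' S₁))
          (GCtx.bind (Binding.var y' S₂)))) := by
        rintro ⟨T'', hT''⟩
        rw [toList_fill] at hT''
        simp only [List.mem_append, GCtx.toList, List.mem_singleton] at hT''
        rcases hT'' with (h' | (h' | h')) | h'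
        · exact hx ⟨T'', by rw [hcomm GCtx.empty, toList_fill]; simp [h']⟩
        · injection h' with h1 _; exact hnex h1.symm
        · injection h' with h1 _; exact hney h1.symm
        · exact hx ⟨T'', by rw [hcomm GCtx.empty, toList_fill]; simp [h']⟩
      have hNid : subst N V x = N := subst_id hN x V hxparts
      simp only [subst, if_neg (not_or.mpr ⟨hnex, hney⟩), hNid]
      rw [hcomm C]
      have hsubv : vdom (G₀.fill (G''.fill C)) ⊆ vdom (G₀.fill Γ) := by
        rw [← hcomm C, hΓ, ← hcomm (GCtx.bind (Binding.var x S))]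
        exact vdom_fill_runtime G hC _
      exact Typing.olet G₀ (G''.fill C) x' y' _ N S₁ S₂ T e hxy
        (fun hmem' => hx' (hsubv hmem')) (fun hmem' => hy' (hsubv hmem')) hM' hN
    · have hxΓ : x ∉ vdom Γ := by
        rintro ⟨T'', hT''⟩
        refine hx ⟨T'', ?_⟩
        rw [hF1 GCtx.empty]
        exact (hmem GCtx.empty Γ _).mpr (Or.inr (Or.inr (Or.inr (Or.inl hT''))))
      have hMid : subst M V x = M := subst_id hM x V hxΓ
      obtain ⟨Gp, hGp⟩ := hF4 (GCtx.comma (GCtx.bind (Binding.var x' S₁))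
        (GCtx.bind (Binding.var y' S₂)))
      obtain ⟨Gq, hGq⟩ := hF3 C
      have heqN : GPat.fill G₀ (GCtx.comma (GCtx.bind (Binding.var x' S₁))
          (GCtx.bind (Binding.var y' S₂))) = Gp.fill (GCtx.bind (Binding.var x S)) := by
        rw [hF2, hGp]
      have hxGp : x ∉ vdom (Gp.fill GCtx.empty) := by
        rintro ⟨T'', hT''⟩
        rw [hGp GCtx.empty] at hT''
        have h5 := (hmem GCtx.empty _ _).mp hT''
        rcases h5 with h' | h' | h' | h' | h'
        · exact hx ⟨T'', by rw [hF1 GCtx.empty]; exact (hmem _ _ _).mpr (Or.inl h')⟩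
        · simp [GCtx.toList] at h'
        · refine hx ⟨T'', ?_⟩
          rw [hF1 GCtx.empty]
          exact (hmem _ _ _).mpr (Or.inr (Or.inr (Or.inl h')))
        · simp only [GCtx.toList, List.mem_append, List.mem_singleton] at h'
          rcases h' with h' | h'
          · injection h' with h1 _; exact hnex h1.symm
          · injection h' with h1 _; exact hney h1.symm
        · refine hx ⟨T'', ?_⟩
          rw [hF1 GCtx.empty]
          exact (hmem _ _ _).mpr (Or.inr (Or.inr (Or.inr (Or.inr h'))))
      have hN' := ihN Gp x S V C hS heqN hxGp hC hval hV
      rw [hGp C, ← hGq] at hN'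
      simp only [subst, if_neg (not_or.mpr ⟨hnex, hney⟩), hMid]
      have hgoalctx : GPat.fill G C = Gq.fill Γ := by rw [hF1 C, hGq Γ]
      rw [hgoalctx]
      have hsubv : vdom (Gq.fill Γ) ⊆ vdom (G₀.fill Γ) := by
        rw [← hgoalctx, heq]
        exact vdom_fill_runtime G hC _
      exact Typing.olet Gq Γ x' y' M _ S₁ S₂ T e hxy
        (fun hmem' => hx' (hsubv hmem')) (fun hmem' => hy' (hsubv hmem')) hM hN'
  | weaken Γ₁ Γ₂ M T e₁ e₂ hM hsub hee ih =>
    intro G x S V C hS heq hx hC hval hV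
    subst heq
    have hv : (Binding.var x S).unrB = false := by simpa [Binding.unrB] using hS
    obtain ⟨⟨hn, g, hbd, hinj, hsurj, hlab, hedg⟩, hunr⟩ := char_iff.mp hsub
    have hpA := posG_lt hv G
    obtain ⟨i₀, hi₀, hgi⟩ := hsurj (posG G) hpA
    have hlabi₀ : (interpC Γ₁).label i₀ = Binding.var x S := by
      rw [← hlab i₀ hi₀, hgi, label_posG hv G]
    have hvmem : Binding.var x S ∈ Γ₁.toList := by
      have h5 := mem_toList_of_label Γ₁ i₀ hi₀
      rwa [hlabi₀] at h5
    obtain ⟨G', hG'⟩ := exists_pattern_of_mem hvmem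
    have huniqA : ∀ (j : ℕ) (T' : Ty α),
        j < (interpC (G.fill (GCtx.bind (Binding.var x S)))).n →
        (interpC (G.fill (GCtx.bind (Binding.var x S)))).label j = Binding.var x T' →
        j = posG G := by
      intro j T' hj hlabj
      by_contra hne
      exact hx ⟨T', hlabj ▸ label_ne_posG hv G j hj hne⟩
    have hxG' : x ∉ vdom (G'.fill GCtx.empty) := by
      rintro ⟨T', hT'⟩
      by_cases hu : T'.unrB = true
      · have hmem₁ : Binding.var x T' ∈ Γ₁.toList := by
          rw [toList_fill] at hT'
          simp only [GCtx.toList, List.mem_append, List.not_mem_nil, or_false] at hT'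
          rw [hG', toList_fill]
          simp only [List.mem_append]
          tauto
        have h1 : Binding.var x T' ∈ unrSetC Γ₁ :=
          mem_unrSet_iff.mpr ⟨hmem₁, by simpa [Binding.unrB] using hu⟩
        obtain ⟨h2m, h2u⟩ := mem_unrSet_iff.mp (hunr h1)
        rw [toList_fill] at h2m
        simp only [List.mem_append, GCtx.toList, List.mem_singleton] at h2m
        rcases h2m with (h' | h') | h'
        · exact hx ⟨T', by rw [toList_fill]; simp [h']⟩
        · injection h' with _ h4
          rw [h4, hS] at hu
          exact Bool.false_ne_true hu
        · exact hx ⟨T', by rw [toList_fill]; simp [h']⟩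
      · have hbord : (Binding.var x T').unrB = false := by simpa [Binding.unrB] using hu
        obtain ⟨i, hi, hne, hlabi⟩ := exists_index_ne_posG hv hbord G' hT'
        rw [← hG'] at hi hlabi
        have hpos' : (interpC Γ₁).label (posG G') = Binding.var x S := by
          rw [hG']; exact label_posG hv G'
        have hposlt : posG G' < (interpC Γ₁).n := by rw [hG']; exact posG_lt hv G'
        have h1 : g i = posG G := huniqA (g i) T' (hbd i hi) (by rw [hlab i hi, hlabi])
        have h2 : g (posG G') = posG G :=
          huniqA (g (posG G')) S (hbd _ hposlt) (by rw [hlab _ hposlt, hpos'])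
        exact hne (hinj i (posG G') hi hposlt (by rw [h1, h2]))
    have hres := ih G' x S V C hS hG' hxG' hC hval hV
    have hsub' : SubC (G.fill C) (G'.fill C) := by
      refine subC_fill_subst hv ?_ ?_ C
      · rw [← hG']; exact hsub
      · intro hmem'
        exact hx ⟨S, hmem'⟩
    exact Typing.weaken _ _ _ _ e₁ e₂ hres hsub' hee

end Aux14
section Aux15

variable {α : Type}

lemma extEq_fill_congr {Δ Δ' : Ctx α} (G : CtxPat α)
    (h : (interpC Δ).ExtEq (interpC Δ')) :
    (interpC (G.fill Δ)).ExtEq (interpC (G.fill Δ')) := by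
  induction G with
  | hole => exact h
  | commaL G₁ Δ₂ ih => exact Graph.ExtEq.join ih (Graph.ExtEq.refl _)
  | commaR Δ₂ G₁ ih => exact Graph.ExtEq.join (Graph.ExtEq.refl _) ih
  | parL G₁ Δ₂ ih => exact Graph.ExtEq.union ih (Graph.ExtEq.refl _)
  | parR Δ₂ G₁ ih => exact Graph.ExtEq.union (Graph.ExtEq.refl _) ih

end Aux15

/-- **Value substitution.** If `𝒢[x:S] ⊢ M : T | e₁`, `x ∉ dom(𝒢[·])`, and
`C ⊢ V : S | e₂` for a run-time context `C` and a value `V`, then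
`𝒢[C] ⊢ M[V/x] : T | e₁ ⊔ e₂`. -/
theorem value_substitution {α : Type} (P : OPM α) (G : CtxPat α) (x : ℕ)
    (S T : Ty α) (M V : Expr α) (C : Ctx α) (e₁ e₂ : Bool)
    (hty : Typing P (GPat.fill G (GCtx.bind (Binding.var x S))) M T e₁)
    (hx : x ∉ vdom (GPat.fill G GCtx.empty))
    (hC : isRuntime C) (hV : IsValue V)
    (htyV : Typing P C V S e₂) :
    Typing P (GPat.fill G C) (subst M V x) T (e₁ || e₂) := by
  have hVf : Typing P C V S false := value_false htyV hV
  have hle : e₁ ≤ (e₁ || e₂) := by cases e₁ <;> cases e₂ <;> decide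
  by_cases hS : S.unrB = true
  · -- unrestricted case
    have hCunr : isUnrCtx C := value_unr_ctx htyV hV hS
    have hEunr : isUnrCtx (GCtx.empty : Ctx α) := by
      intro b hb; simp [GCtx.toList] at hb
    have hVempty : Typing P GCtx.empty V S false := by
      refine Typing.weaken C GCtx.empty V S false false hVf ?_ (le_refl false)
      refine char_iff.mpr ⟨gchar_of_extEq (extEq_of_unr hEunr hCunr), ?_⟩
      rw [runtime_unrSet hC]
      exact Set.empty_subset _
    have hcond : ∀ T', Binding.var x T' ∈
        (GPat.fill G (GCtx.bind (Binding.var x S))).toList → T' = S := by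
      intro T' hT'
      rw [toList_fill] at hT'
      simp only [GCtx.toList, List.mem_append, List.mem_singleton] at hT'
      rcases hT' with (h' | h') | h'
      · exact absurd ⟨T', by rw [toList_fill]; simp [h']⟩ hx
      · first
          | exact h'
          | injection h'
          | (injection h' with _ h2; exact h2)
      · exact absurd ⟨T', by rw [toList_fill]; simp [h']⟩ hx
    have hsu := subst_unr hty x S V hS hVempty hV hcond
    rw [eraseX_fill_of_not_mem (fun T' hT' => hx ⟨T', hT'⟩)] at hsu
    have herase : eraseX x (GCtx.bind (Binding.var x S)) = GCtx.empty := by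
      simp [eraseX]
    rw [herase] at hsu
    refine Typing.weaken _ _ _ _ e₁ (e₁ || e₂) hsu ?_ hle
    refine subC_of_extEq (extEq_fill_congr G (extEq_of_unr hCunr hEunr)) ?_
    intro b hb
    obtain ⟨hb1, hb2⟩ := mem_unrSet_iff.mp hb
    rw [toList_fill] at hb1
    simp only [GCtx.toList, List.mem_append, List.not_mem_nil, or_false] at hb1
    refine mem_unrSet_iff.mpr ⟨?_, hb2⟩
    rw [toList_fill]
    simp only [List.mem_append]
    tauto
  · -- ordered case
    have hSf : S.unrB = false := by simpa using hS
    have h1 := subst_ord hty G x S V C hSf rfl hx hC hV hVf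
    exact Typing.weaken _ _ _ _ e₁ (e₁ || e₂) h1 (subC_refl _) hle

end LawOrder
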